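/- arXiv:1009.6109 — 7 statements merged into one kernel-verified Lean document; each statement's English description precedes it below -/
import Mathlib

section
/- Let q = p^h > 2 be a prime power, K a finite field with q² elements, and 𝒰 a unital in PG(2,q²). Let h ∈ PGL(3,K) be a projectivity preserving 𝒰 that fixes pointwise the tangent line ℓ of 𝒰 at a point O ∈ 𝒰 and also fixes a point Y ∈ 𝒰 with Y ∉ ℓ. If the order of h is not divisible by p, then h is the identity. -/
open Projectivization
open scoped LinearAlgebra.Projectivization

variable (K : Type*) [Field K]

/-- The point set of `PG(2,K)`. -/
abbrev PGPt := ℙ K (Fin 3 → K)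

/-- A line of `PG(2,K)`: a 2-dimensional subspace of `K³`. -/
def PGLn := {W : Submodule K (Fin 3 → K) // Module.finrank K W = 2}

variable {K}

/-- Incidence between points and lines of `PG(2,K)`. -/
def PGMem (P : PGPt K) (L : PGLn K) : Prop := P.submodule ≤ L.1

/-- A unital in `PG(2,q²)`: a set of `q³+1` points meeting every line in `1` or `q+1` points. -/
def IsUnital (q : ℕ) (U : Set (PGPt K)) : Prop :=
  U.ncard = q ^ 3 + 1 ∧
    ∀ L : PGLn K, {P ∈ U | PGMem P L}.ncard = 1 ∨ {P ∈ U | PGMem P L}.ncard = q + 1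

lemma projmap_mul (f g : (Fin 3 → K) ≃ₗ[K] (Fin 3 → K)) (P : PGPt K) :
    Projectivization.map f.toLinearMap f.injective
      (Projectivization.map g.toLinearMap g.injective P) =
    Projectivization.map (f * g).toLinearMap (f * g).injective P := by
  induction' P using Projectivization.ind with v hv
  rfl

lemma projmap_one (P : PGPt K) :
    Projectivization.map (1 : (Fin 3 → K) ≃ₗ[K] (Fin 3 → K)).toLinearMap
      (1 : (Fin 3 → K) ≃ₗ[K] (Fin 3 → K)).injective P = P := by
  induction' P using Projectivization.ind with v hv
  rfl

/-- The permutation of the projective plane induced by a linear automorphism of `K³`. -/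
def projPerm (e : (Fin 3 → K) ≃ₗ[K] (Fin 3 → K)) : Equiv.Perm (PGPt K) where
  toFun := Projectivization.map e.toLinearMap e.injective
  invFun := Projectivization.map e.symm.toLinearMap e.symm.injective
  left_inv := fun P => by
    rw [projmap_mul, show e.symm * e = 1 from LinearEquiv.ext fun v => e.symm_apply_apply v, projmap_one]
  right_inv := fun P => by
    rw [projmap_mul, show e * e.symm = 1 from LinearEquiv.ext fun v => e.apply_symm_apply v, projmap_one]

/-- The homomorphism from linear automorphisms of `K³` to permutations of `PG(2,K)`;
its range is the group `PGL(3,K)` of projectivities, acting faithfully on the plane. -/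
def projHom : ((Fin 3 → K) ≃ₗ[K] (Fin 3 → K)) →* Equiv.Perm (PGPt K) where
  toFun := projPerm
  map_one' := by ext P; exact projmap_one P
  map_mul' := fun f g => by ext P; exact (projmap_mul f g P).symm

/-- `PGL(3,K)` as a group of permutations of the plane. -/
def PGL3 (K : Type*) [Field K] : Subgroup (Equiv.Perm (PGPt K)) := (projHom (K := K)).range

/-- The subgroup of `PGL(3,K)` preserving a point set `U`. -/
def presGroup (U : Set (PGPt K)) : Subgroup (Equiv.Perm (PGPt K)) where
  carrier := {σ | σ ∈ PGL3 K ∧ σ '' U = U}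
  one_mem' := ⟨one_mem _, by simp⟩
  mul_mem' := fun {a b} ha hb => ⟨mul_mem ha.1 hb.1, by
    rw [show ⇑(a * b) = ⇑a ∘ ⇑b from rfl, Set.image_comp, hb.2, ha.2]⟩
  inv_mem' := fun {a} ha => ⟨inv_mem ha.1, by
    conv_lhs => rw [← ha.2]
    rw [show (a⁻¹ : Equiv.Perm (PGPt K)) = a.symm from rfl]
    exact Equiv.symm_image_image a U⟩

/-- The stabiliser of two points inside the group preserving `U`. -/
def twoPtStab (U : Set (PGPt K)) (P Q : PGPt K) : Subgroup (Equiv.Perm (PGPt K)) where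
  carrier := {σ | σ ∈ presGroup U ∧ σ P = P ∧ σ Q = Q}
  one_mem' := ⟨one_mem _, rfl, rfl⟩
  mul_mem' := fun {a b} ha hb => ⟨mul_mem ha.1 hb.1, by
    simp [Equiv.Perm.mul_apply, hb.2.1, ha.2.1], by simp [Equiv.Perm.mul_apply, hb.2.2, ha.2.2]⟩
  inv_mem' := fun {a} ha => ⟨inv_mem ha.1,
    by rw [Equiv.Perm.inv_def, Equiv.symm_apply_eq]; exact ha.2.1.symm,
    by rw [Equiv.Perm.inv_def, Equiv.symm_apply_eq]; exact ha.2.2.symm⟩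

/-- The classical (Hermitian) unital: image of the Hermitian curve
`x^{q+1} + y^{q+1} + z^{q+1} = 0` under an element of `PGL(3,K)`. -/
def IsClassicalUnital (q : ℕ) (U : Set (PGPt K)) : Prop :=
  ∃ σ ∈ PGL3 K, σ '' {P : PGPt K |
    P.rep 0 ^ (q + 1) + P.rep 1 ^ (q + 1) + P.rep 2 ^ (q + 1) = 0} = U

lemma aux_pair_indep {V : Type*} [AddCommGroup V] [Module K V] {W : Submodule K V}
    {y w : V} (hy : y ∉ W) (hwW : w ∈ W) (hw : w ≠ 0) :
    LinearIndependent K ![y, w] := by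
  rw [LinearIndependent.pair_iff]
  intro s t hst
  rcases eq_or_ne s 0 with hs | hs
  · subst hs
    rw [zero_smul, zero_add] at hst
    exact ⟨rfl, by simpa [hw] using hst⟩
  · exfalso
    apply hy
    have h1 : s • y = -(t • w) := eq_neg_of_add_eq_zero_left hst
    have : y = (-(s⁻¹ * t)) • w := by
      calc y = s⁻¹ • (s • y) := by rw [smul_smul, inv_mul_cancel₀ hs, one_smul]
        _ = s⁻¹ • (-(t • w)) := by rw [h1]
        _ = (-(s⁻¹ * t)) • w := by rw [smul_neg, smul_smul, neg_smul]
    rw [this]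
    exact W.smul_mem _ hwW

lemma aux_range_pair {α : Type*} (x z : α) : Set.range ![x, z] = {x, z} := by
  rw [Set.pair_comm]; simp

lemma aux_finrank_span_pair {v w : Fin 3 → K} (h : LinearIndependent K ![v, w]) :
    Module.finrank K (Submodule.span K ({v, w} : Set (Fin 3 → K))) = 2 := by
  rw [← aux_range_pair v w]
  simpa using finrank_span_eq_card h

lemma aux_scalar_on_plane {e : (Fin 3 → K) ≃ₗ[K] (Fin 3 → K)} {W : Submodule K (Fin 3 → K)}
    (hW : Module.finrank K W = 2)
    (hfix : ∀ v ∈ W, v ≠ 0 → ∃ c : K, e v = c • v) :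
    ∃ a : K, a ≠ 0 ∧ ∀ v ∈ W, e v = a • v := by
  let b := Module.finBasisOfFinrankEq K W hW
  set u : Fin 2 → (Fin 3 → K) := fun i => ((b i : W) : Fin 3 → K) with hu
  have hmem : ∀ i, u i ∈ W := fun i => (b i).2
  have li : LinearIndependent K u := by
    exact b.linearIndependent.map' W.subtype (Submodule.ker_subtype W)
  have hne : ∀ i, u i ≠ 0 := fun i => by
    simpa [hu, ZeroMemClass.coe_eq_zero] using b.ne_zero i
  obtain ⟨c0, hc0⟩ := hfix (u 0) (hmem 0) (hne 0)
  obtain ⟨c1, hc1⟩ := hfix (u 1) (hmem 1) (hne 1)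
  have h01 : u 0 + u 1 ≠ 0 := by
    intro hcon
    have h2 := Fintype.linearIndependent_iff.mp li ![1, 1]
      (by simpa [Fin.sum_univ_two] using hcon) 0
    simp at h2
  obtain ⟨c2, hc2⟩ := hfix (u 0 + u 1) (W.add_mem (hmem 0) (hmem 1)) h01
  have h' : c2 • u 0 + c2 • u 1 = c0 • u 0 + c1 • u 1 := by
    rw [← smul_add, ← hc2, map_add, hc0, hc1]
  have key : (c0 - c2) • u 0 + (c1 - c2) • u 1 = 0 := by
    calc (c0 - c2) • u 0 + (c1 - c2) • u 1
        = (c0 • u 0 + c1 • u 1) - (c2 • u 0 + c2 • u 1) := by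
          rw [sub_smul, sub_smul]; abel
      _ = 0 := sub_eq_zero_of_eq h'.symm
  have hz := Fintype.linearIndependent_iff.mp li ![c0 - c2, c1 - c2]
    (by simpa [Fin.sum_univ_two] using key)
  have e0 : c0 = c2 := by have := hz 0; rw [← sub_eq_zero]; simpa using this
  have e1 : c1 = c2 := by have := hz 1; rw [← sub_eq_zero]; simpa using this
  refine ⟨c0, ?_, ?_⟩
  · intro h0
    apply hne 0
    have : e (u 0) = 0 := by rw [hc0, h0, zero_smul]
    exact e.map_eq_zero_iff.mp this
  · intro v hv
    have hv' : (b.repr ⟨v, hv⟩ 0) • u 0 + (b.repr ⟨v, hv⟩ 1) • u 1 = v := by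
      have h2 : ((∑ i, b.repr ⟨v, hv⟩ i • b i : W) : Fin 3 → K) = v :=
        congrArg Subtype.val (b.sum_repr ⟨v, hv⟩)
      rw [Fin.sum_univ_two] at h2
      simp only [Submodule.coe_add, SetLike.val_smul] at h2
      exact h2
    rw [← hv', e.map_add, e.map_smul, e.map_smul, hc0, hc1, e1, ← e0]
    module

lemma projHom_apply_mk (e : (Fin 3 → K) ≃ₗ[K] (Fin 3 → K)) (v : Fin 3 → K) (hv : v ≠ 0) :
    (projHom e) (Projectivization.mk K v hv) =
      Projectivization.mk K (e v) (fun h0 => hv (e.map_eq_zero_iff.mp h0)) := rfl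

/-- Let `U` be a unital in `PG(2,q²)`, `q = p^h > 2`.  A projectivity preserving `U` which fixes
pointwise the tangent line `ℓ` of `U` at a point `O ∈ U`, fixes a point `Y ∈ U` off `ℓ`, and has
order not divisible by `p`, is the identity. -/
theorem perspectivity_preserving_unital_is_identity
    (p n q : ℕ) (hp : p.Prime) (hn : 0 < n) (hqpn : q = p ^ n) (hq2 : 2 < q)
    {K : Type*} [Field K] [Fintype K] (hK : Fintype.card K = q ^ 2)
    (U : Set (PGPt K)) (hU : IsUnital q U)
    (O : PGPt K) (hO : O ∈ U)
    (ℓ : PGLn K) (hOℓ : PGMem O ℓ) (htangent : {R ∈ U | PGMem R ℓ} = {O})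
    (Y : PGPt K) (hY : Y ∈ U) (hYℓ : ¬ PGMem Y ℓ)
    (h : Equiv.Perm (PGPt K)) (hM : h ∈ presGroup U)
    (haxis : ∀ R : PGPt K, PGMem R ℓ → h R = R)
    (hcentre : h Y = Y)
    (horder : ¬ p ∣ orderOf h) :
    h = 1 := by
  classical
  obtain ⟨hPGL, hUimg⟩ := hM
  obtain ⟨e, he⟩ := hPGL
  set y := Y.rep with hydef
  have hy0 : y ≠ 0 := Y.rep_nonzero
  have hyℓ : y ∉ ℓ.1 := fun hmem => hYℓ (by
    rw [PGMem, Projectivization.submodule_eq, Submodule.span_singleton_le_iff_mem]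
    exact hmem)
  set o := O.rep with hodef
  have ho0 : o ≠ 0 := O.rep_nonzero
  have hoℓ : o ∈ ℓ.1 := by
    have h1 := hOℓ
    rwa [PGMem, Projectivization.submodule_eq, Submodule.span_singleton_le_iff_mem] at h1
  have hYmk : Projectivization.mk K y hy0 = Y := Projectivization.mk_rep Y
  -- e is scalar `a` on ℓ
  have hfix : ∀ v ∈ ℓ.1, v ≠ 0 → ∃ c : K, e v = c • v := by
    intro v hv hv0
    have hPG : PGMem (Projectivization.mk K v hv0) ℓ := by
      rw [PGMem, Projectivization.submodule_mk, Submodule.span_singleton_le_iff_mem]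
      exact hv
    have hax := haxis _ hPG
    rw [← he, projHom_apply_mk, Projectivization.mk_eq_mk_iff'] at hax
    obtain ⟨c, hc⟩ := hax
    exact ⟨c, hc.symm⟩
  obtain ⟨a, ha0, hae⟩ := aux_scalar_on_plane ℓ.2 hfix
  -- e scales y by `lam`
  obtain ⟨lam, hlam⟩ : ∃ c : K, e y = c • y := by
    have hax : (projHom e) (Projectivization.mk K y hy0) = Projectivization.mk K y hy0 := by
      rw [hYmk, he, hcentre]
    rw [projHom_apply_mk, Projectivization.mk_eq_mk_iff'] at hax
    obtain ⟨c, hc⟩ := hax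
    exact ⟨c, hc.symm⟩
  have hlam0 : lam ≠ 0 := by
    intro h0
    apply hy0
    apply e.map_eq_zero_iff.mp
    rw [hlam, h0, zero_smul]
  -- the line M0 = OY
  have hyo : LinearIndependent K ![y, o] := aux_pair_indep hyℓ hoℓ ho0
  set M0 : PGLn K := ⟨Submodule.span K {y, o}, aux_finrank_span_pair hyo⟩ with hM0def
  have hyM0 : y ∈ M0.1 := Submodule.subset_span (Set.mem_insert _ _)
  have hoM0 : o ∈ M0.1 := Submodule.subset_span (Set.mem_insert_of_mem _ rfl)
  -- a point P of U off the line OY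
  obtain ⟨P, hPU, hPM0⟩ : ∃ P ∈ U, ¬ PGMem P M0 := by
    by_contra hcon
    push_neg at hcon
    have heq : {Q ∈ U | PGMem Q M0} = U :=
      subset_antisymm (fun Q hQ => hQ.1) (fun Q hQ => ⟨hQ, hcon Q hQ⟩)
    have hc2 := hU.2 M0
    rw [heq, hU.1] at hc2
    have hq3 : q < q ^ 3 := by nlinarith
    rcases hc2 with h1 | h1 <;> linarith
  set pr := P.rep with hprdef
  have hpr0 : pr ≠ 0 := P.rep_nonzero
  have hprM0 : pr ∉ M0.1 := fun hmem => hPM0 (by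
    rw [PGMem, Projectivization.submodule_eq, Submodule.span_singleton_le_iff_mem]; exact hmem)
  have hypr : LinearIndependent K ![y, pr] := by
    apply aux_pair_indep (W := Submodule.span K {pr}) ?_ (Submodule.mem_span_singleton_self pr) hpr0
    intro hmem
    rw [Submodule.mem_span_singleton] at hmem
    obtain ⟨c, hc⟩ := hmem
    have hc0 : c ≠ 0 := fun h0 => hy0 (by rw [← hc, h0, zero_smul])
    apply hprM0
    have hpy : pr = c⁻¹ • y := by rw [← hc, smul_smul, inv_mul_cancel₀ hc0, one_smul]
    rw [hpy]
    exact M0.1.smul_mem _ hyM0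
  -- the secant line m = YP and a point w of it on ℓ
  set m : Submodule K (Fin 3 → K) := Submodule.span K {y, pr} with hmdef
  have hm2 : Module.finrank K m = 2 := aux_finrank_span_pair hypr
  have hym : y ∈ m := Submodule.subset_span (Set.mem_insert _ _)
  have hprm : pr ∈ m := Submodule.subset_span (Set.mem_insert_of_mem _ rfl)
  obtain ⟨w, hwmℓ, hw0⟩ : ∃ w ∈ m ⊓ ℓ.1, w ≠ 0 := by
    apply (Submodule.ne_bot_iff _).mp
    intro hbot
    have hsum := Submodule.finrank_sup_add_finrank_inf_eq m ℓ.1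
    have hle : Module.finrank K ↥(m ⊔ ℓ.1) ≤ 3 := by
      have h3 := Submodule.finrank_le (m ⊔ ℓ.1)
      rwa [Module.finrank_fin_fun] at h3
    rw [hbot, finrank_bot, hm2, ℓ.2] at hsum
    omega
  obtain ⟨hwm, hwℓ⟩ := Submodule.mem_inf.mp hwmℓ
  have hyw : LinearIndependent K ![y, w] := aux_pair_indep hyℓ hwℓ hw0
  have hmeq : m = Submodule.span K ({y, w} : Set (Fin 3 → K)) := by
    refine (Submodule.eq_of_le_of_finrank_le ?_ ?_).symm
    · rw [Submodule.span_le]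
      intro x hx
      simp only [Set.mem_insert_iff, Set.mem_singleton_iff] at hx
      rcases hx with rfl | rfl
      · exact hym
      · exact hwm
    · rw [hm2, aux_finrank_span_pair hyw]
  -- the point [w] of ℓ is not in U
  have hwU : Projectivization.mk K w hw0 ∉ U := by
    intro hwU'
    have hmem : Projectivization.mk K w hw0 ∈ {R ∈ U | PGMem R ℓ} :=
      ⟨hwU', by
        rw [PGMem, Projectivization.submodule_mk, Submodule.span_singleton_le_iff_mem]
        exact hwℓ⟩
    rw [htangent, Set.mem_singleton_iff] at hmem
    have hom : o ∈ m := by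
      have h2 : (Projectivization.mk K w hw0).submodule = Submodule.span K {w} :=
        Projectivization.submodule_mk w hw0
      rw [hmem, Projectivization.submodule_eq] at h2
      have h1 : o ∈ Submodule.span K {w} := by
        rw [← h2]; exact Submodule.mem_span_singleton_self o
      exact ((Submodule.span_singleton_le_iff_mem w m).mpr hwm) h1
    rw [hmdef] at hom
    obtain ⟨s, t, hst⟩ := Submodule.mem_span_pair.mp hom
    have ht0 : t ≠ 0 := by
      intro h0
      rw [h0, zero_smul, add_zero] at hst
      have hs0 : s ≠ 0 := fun h0' => ho0 (by rw [← hst, h0', zero_smul])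
      apply hyℓ
      have hyo' : y = s⁻¹ • o := by rw [← hst, smul_smul, inv_mul_cancel₀ hs0, one_smul]
      rw [hyo']
      exact ℓ.1.smul_mem _ hoℓ
    apply hprM0
    have hpr' : pr = t⁻¹ • (o - s • y) := by
      have h3 : t • pr = o - s • y := by rw [← hst]; abel
      rw [← h3, smul_smul, inv_mul_cancel₀ ht0, one_smul]
    rw [hpr']
    exact M0.1.smul_mem _ (M0.1.sub_mem hoM0 (M0.1.smul_mem _ hyM0))
  -- parametrisation of the affine points of m
  have hfnz : ∀ t : K, y + t • w ≠ 0 := by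
    intro t hcon
    apply hyℓ
    have h1 : y = (-t) • w := by rw [neg_smul]; exact eq_neg_of_add_eq_zero_left hcon
    rw [h1]
    exact ℓ.1.smul_mem _ hwℓ
  set f : K → PGPt K := fun t => Projectivization.mk K (y + t • w) (hfnz t) with hfdef
  have hfinj : Function.Injective f := by
    intro s t hst
    simp only [hfdef] at hst
    rw [Projectivization.mk_eq_mk_iff'] at hst
    obtain ⟨c, hc⟩ := hst
    have hc' : c • y + (c * t) • w = y + s • w := by
      rw [← smul_smul, ← smul_add]; exact hc
    have hkey : (c - 1) • y + (c * t - s) • w = 0 := by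
      calc (c - 1) • y + (c * t - s) • w
          = (c • y + (c * t) • w) - (y + s • w) := by
            rw [sub_smul, sub_smul, one_smul]; abel
        _ = 0 := sub_eq_zero_of_eq hc'
    obtain ⟨h1, h2⟩ := LinearIndependent.pair_iff.mp hyw _ _ hkey
    have hc1 : c = 1 := by rwa [sub_eq_zero] at h1
    rw [hc1, one_mul, sub_eq_zero] at h2
    exact h2.symm
  set L : PGLn K := ⟨m, hm2⟩ with hLdef
  set S : Set K := {t : K | f t ∈ U} with hSdef
  have himg : f '' S = {Q ∈ U | PGMem Q L} := by
    ext Q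
    constructor
    · rintro ⟨t, htS, rfl⟩
      refine ⟨htS, ?_⟩
      show (f t).submodule ≤ m
      simp only [hfdef]
      rw [Projectivization.submodule_mk, Submodule.span_singleton_le_iff_mem]
      exact m.add_mem hym (m.smul_mem _ hwm)
    · rintro ⟨hQU, hQL⟩
      have hrm : Q.rep ∈ Submodule.span K {y, w} := by
        have h4 := hQL
        rw [PGMem, Projectivization.submodule_eq, Submodule.span_singleton_le_iff_mem] at h4
        rw [← hmeq]
        exact h4
      obtain ⟨s, t, hst⟩ := Submodule.mem_span_pair.mp hrm
      have hs0 : s ≠ 0 := by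
        intro h0
        rw [h0, zero_smul, zero_add] at hst
        have ht0 : t ≠ 0 := fun h0' => Q.rep_nonzero (by rw [← hst, h0', zero_smul])
        apply hwU
        have hQw : Projectivization.mk K w hw0 = Q := by
          rw [← Projectivization.mk_rep Q, Projectivization.mk_eq_mk_iff']
          exact ⟨t⁻¹, by rw [← hst, smul_smul, inv_mul_cancel₀ ht0, one_smul]⟩
        rw [hQw]
        exact hQU
      have hfQ : f (s⁻¹ * t) = Q := by
        rw [← Projectivization.mk_rep Q]
        simp only [hfdef]
        rw [Projectivization.mk_eq_mk_iff']
        refine ⟨s⁻¹, ?_⟩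
        rw [← hst, smul_add, smul_smul, smul_smul, inv_mul_cancel₀ hs0, one_smul]
      refine ⟨s⁻¹ * t, ?_, hfQ⟩
      show f (s⁻¹ * t) ∈ U
      rw [hfQ]
      exact hQU
  -- Y ≠ P and both lie on L
  have hYP : Y ≠ P := by
    intro hEq
    apply hPM0
    rw [← hEq, PGMem, Projectivization.submodule_eq, Submodule.span_singleton_le_iff_mem]
    exact hyM0
  have hYin : Y ∈ {Q ∈ U | PGMem Q L} := ⟨hY, by
    rw [PGMem, Projectivization.submodule_eq, Submodule.span_singleton_le_iff_mem]
    exact hym⟩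
  have hPin : P ∈ {Q ∈ U | PGMem Q L} := ⟨hPU, by
    rw [PGMem, Projectivization.submodule_eq, Submodule.span_singleton_le_iff_mem]
    exact hprm⟩
  have hScard : S.ncard = q + 1 := by
    have h1 : (f '' S).ncard = S.ncard := Set.ncard_image_of_injective S hfinj
    rcases hU.2 L with hc | hc
    · exfalso
      obtain ⟨x, hx⟩ := Set.ncard_eq_one.mp hc
      rw [hx, Set.mem_singleton_iff] at hYin hPin
      exact hYP (hYin.trans hPin.symm)
    · rw [← h1, himg]
      exact hc
  have hf0 : f 0 = Y := by
    rw [← hYmk]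
    simp only [hfdef]
    rw [Projectivization.mk_eq_mk_iff']
    exact ⟨1, by rw [one_smul, zero_smul, add_zero]⟩
  have h0S : (0 : K) ∈ S := by
    show f 0 ∈ U
    rw [hf0]
    exact hY
  -- S is closed under multiplication by μ
  set μ : K := lam⁻¹ * a with hμdef
  have hμ0 : μ ≠ 0 := mul_ne_zero (inv_ne_zero hlam0) ha0
  have hclos : ∀ t ∈ S, μ * t ∈ S := by
    intro t htS
    have h1 : h (f t) ∈ U := by
      rw [← hUimg]
      exact ⟨f t, htS, rfl⟩
    have h2 : h (f t) = f (μ * t) := by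
      rw [← he]
      simp only [hfdef]
      rw [projHom_apply_mk, Projectivization.mk_eq_mk_iff']
      refine ⟨lam, ?_⟩
      have hew : e w = a • w := hae w hwℓ
      have hcoef : lam * (μ * t) = t * a := by
        rw [hμdef, show lam * (lam⁻¹ * a * t) = lam * lam⁻¹ * (a * t) from by ring,
          mul_inv_cancel₀ hlam0, one_mul, mul_comm]
      rw [e.map_add, e.map_smul, hlam, hew, smul_add, smul_smul, smul_smul, hcoef]
    show f (μ * t) ∈ U
    rw [← h2]
    exact h1
  -- product trick : μ ^ q = 1
  have hSfin : S.Finite := Set.toFinite S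
  set F : Finset K := hSfin.toFinset.erase 0 with hFdef
  have hFcard : F.card = q := by
    rw [hFdef, Finset.card_erase_of_mem (by rw [Set.Finite.mem_toFinset]; exact h0S),
      ← Set.ncard_eq_toFinset_card S hSfin, hScard]
    omega
  have hmemF : ∀ t ∈ F, μ * t ∈ F := by
    intro t ht
    rw [hFdef, Finset.mem_erase, Set.Finite.mem_toFinset] at ht ⊢
    exact ⟨mul_ne_zero hμ0 ht.1, hclos t ht.2⟩
  have himgF : F.image (fun t => μ * t) = F := by
    apply Finset.eq_of_subset_of_card_le
    · intro x hx
      rw [Finset.mem_image] at hx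
      obtain ⟨t, ht, rfl⟩ := hx
      exact hmemF t ht
    · rw [Finset.card_image_of_injective _ (mul_right_injective₀ hμ0)]
  have hprodne : (∏ x ∈ F, x) ≠ 0 := by
    rw [Finset.prod_ne_zero_iff]
    intro t ht
    rw [hFdef, Finset.mem_erase] at ht
    exact ht.1
  have hμq : μ ^ q = 1 := by
    have hprod : μ ^ q * ∏ x ∈ F, x = ∏ x ∈ F, x := by
      conv_rhs => rw [← himgF]
      rw [Finset.prod_image (fun x _ z _ hxz => mul_right_injective₀ hμ0 hxz),
        Finset.prod_mul_distrib, Finset.prod_const, hFcard]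
    have h5 : (μ ^ q - 1) * ∏ x ∈ F, x = 0 := by
      rw [sub_mul, one_mul, hprod, sub_self]
    rcases mul_eq_zero.mp h5 with h6 | h6
    · rwa [sub_eq_zero] at h6
    · exact absurd h6 hprodne
  have haq : a ^ q = lam ^ q := by
    have h7 : (lam ^ q)⁻¹ * a ^ q = 1 := by
      rw [← inv_pow, ← mul_pow]
      exact hμq
    exact ((inv_mul_eq_one₀ (pow_ne_zero q hlam0)).mp h7).symm
  -- h ^ q = 1
  have hepow : ∀ j : ℕ, (∀ v ∈ ℓ.1, (e ^ j) v = a ^ j • v) ∧ (e ^ j) y = lam ^ j • y := by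
    intro j
    induction j with
    | zero => exact ⟨fun v _ => by simp, by simp⟩
    | succ k ih =>
      constructor
      · intro v hv
        rw [pow_succ]
        show (e ^ k) (e v) = a ^ (k + 1) • v
        rw [hae v hv, map_smul, ih.1 v hv, smul_smul, ← pow_succ']
      · rw [pow_succ]
        show (e ^ k) (e y) = lam ^ (k + 1) • y
        rw [hlam, map_smul, ih.2, smul_smul, ← pow_succ']
  have hsup : ℓ.1 ⊔ Submodule.span K {y} = ⊤ := by
    apply Submodule.eq_top_of_finrank_eq
    have hinf : ℓ.1 ⊓ Submodule.span K {y} = ⊥ := by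
      rw [Submodule.eq_bot_iff]
      intro x hx
      obtain ⟨hx1, hx2⟩ := Submodule.mem_inf.mp hx
      rw [Submodule.mem_span_singleton] at hx2
      obtain ⟨c, rfl⟩ := hx2
      rcases eq_or_ne c 0 with rfl | hc
      · rw [zero_smul]
      · exfalso
        apply hyℓ
        have hy' : y = c⁻¹ • (c • y) := by rw [smul_smul, inv_mul_cancel₀ hc, one_smul]
        rw [hy']
        exact ℓ.1.smul_mem _ hx1
    have hsum := Submodule.finrank_sup_add_finrank_inf_eq ℓ.1 (Submodule.span K {y})
    rw [hinf, finrank_bot, ℓ.2, finrank_span_singleton hy0] at hsum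
    rw [Module.finrank_fin_fun]
    omega
  have hper : (projHom (e ^ q)) = 1 := by
    ext P1
    induction' P1 using Projectivization.ind with v hv
    rw [projHom_apply_mk, Equiv.Perm.one_apply]
    have hvmem : v ∈ ℓ.1 ⊔ Submodule.span K {y} := by rw [hsup]; exact Submodule.mem_top
    obtain ⟨u, hu, z, hz, rfl⟩ := Submodule.mem_sup.mp hvmem
    obtain ⟨s, rfl⟩ := Submodule.mem_span_singleton.mp hz
    rw [Projectivization.mk_eq_mk_iff']
    refine ⟨lam ^ q, ?_⟩
    rw [(e ^ q).map_add, (e ^ q).map_smul, (hepow q).1 u hu, (hepow q).2, haq,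
      smul_add, smul_smul, smul_smul, mul_comm (lam ^ q) s]
  have hhq : h ^ q = 1 := by
    rw [← he, ← map_pow, hper]
  have hdvd : orderOf h ∣ q := orderOf_dvd_of_pow_eq_one hhq
  rw [hqpn] at hdvd
  obtain ⟨i, hin, hdi⟩ := (Nat.dvd_prime_pow hp).mp hdvd
  rcases Nat.eq_zero_or_pos i with hi0 | hi0
  · rw [hi0, pow_zero] at hdi
    exact orderOf_eq_one_iff.mp hdi
  · exact absurd (hdi ▸ dvd_pow_self p hi0.ne') horder
end

section
/- Let q = p^h be a prime power and K a finite field with q² elements. Let y ∈ K[[t]] be the formal power series with constant term 0 satisfying y^q + y = t^{q+1}. Then for every c ∈ K with c ≠ 0, the series c^q·y^q + c·y has order exactly q + 1. (This computes the intersection multiplicity, at a common point where a linear component of the cone is tangent to the curve, of the Hermitian curve −X₁^{q+1} + X₂^q X₃ + X₂ X₃^q = 0 and the Hermitian cone c^q X₂^q X₃ + c X₂ X₃^q = 0, showing it equals q+1.) -/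
open PowerSeries

private lemma order_pow_aux {K : Type*} [Field K] (y : PowerSeries K) (n : ℕ) :
    (y ^ n).order = n * y.order := by
  induction n with
  | zero => simp [PowerSeries.order_one]
  | succ k ih =>
    rw [pow_succ, PowerSeries.order_mul, ih, Nat.cast_succ, add_one_mul]

/-- Intersection multiplicity of a Hermitian curve and a Hermitian cone at a common point where
a linear component of the cone is tangent to the curve: if `y ∈ K⟦t⟧` is the branch series with
`y^q + y = t^{q+1}` and constant term `0`, then for `c ≠ 0` the series `c^q·y^q + c·y` has order
exactly `q + 1`. -/
theorem hermitian_curve_cone_intersection_multiplicity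
    (p h q : ℕ) (hp : p.Prime) (hh : 0 < h) (hq : q = p ^ h)
    (K : Type*) [Field K] [Fintype K] (hK : Fintype.card K = q ^ 2)
    (y : PowerSeries K) (hy0 : PowerSeries.constantCoeff y = 0)
    (hy : y ^ q + y = PowerSeries.X ^ (q + 1))
    (c : K) (hc : c ≠ 0) :
    (PowerSeries.C (c ^ q) * y ^ q + PowerSeries.C c * y).order = (q + 1 : ℕ) := by
  have hq2 : 2 ≤ q := by
    rw [hq]
    calc 2 ≤ p := hp.two_le
    _ ≤ p ^ h := Nat.le_self_pow hh.ne' p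
  -- y ≠ 0
  have hy_ne : y ≠ 0 := by
    intro h0
    have := congrArg (PowerSeries.coeff (q + 1)) hy
    simp [h0, zero_pow (by omega : q ≠ 0)] at this
  -- 1 ≤ order y
  have h1le : (1 : ℕ∞) ≤ y.order := by
    have := PowerSeries.nat_le_order y 1 (by
      intro i hi
      interval_cases i
      simpa using hy0)
    simpa using this
  have hfin : y.order ≠ ⊤ := fun ht => hy_ne (PowerSeries.order_eq_top.mp ht)
  obtain ⟨d, hd⟩ : ∃ d : ℕ, ((d : ℕ∞)) = y.order := by
    lift y.order to ℕ using hfin with d hd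
    exact ⟨d, rfl⟩
  have hd1 : 1 ≤ d := by
    rw [← hd, ← Nat.cast_one, Nat.cast_le] at h1le
    exact h1le
  -- order of y^q
  have hpow : (y ^ q).order = (q * d : ℕ) := by
    rw [order_pow_aux, ← hd]; push_cast; rfl
  have hdlt : d < q * d := by nlinarith
  -- order (y^q + y) = q + 1, hence d = q + 1
  have hsum : (y ^ q + y).order = (q + 1 : ℕ) := by
    rw [hy, PowerSeries.order_X_pow]
  have hneq : (y ^ q).order ≠ y.order := by
    rw [hpow, ← hd]
    exact fun e => hdlt.ne' (by exact_mod_cast e)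
  have hmin := PowerSeries.order_add_of_order_ne _ _ hneq
  rw [hsum, hpow, ← hd] at hmin
  have hdq : d = q + 1 := by
    rw [min_eq_right (by exact_mod_cast hdlt.le : ((d : ℕ∞)) ≤ ((q * d : ℕ) : ℕ∞))] at hmin
    exact_mod_cast hmin.symm
  -- orders of the two summands
  have hCq : (PowerSeries.C (c ^ q)).order = 0 :=
    PowerSeries.order_zero_of_unit ((isUnit_iff_ne_zero.mpr (pow_ne_zero q hc)).map _)
  have hC : (PowerSeries.C c).order = 0 :=
    PowerSeries.order_zero_of_unit ((isUnit_iff_ne_zero.mpr hc).map _)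
  have h1 : (PowerSeries.C (c ^ q) * y ^ q).order = (q * (q + 1) : ℕ) := by
    rw [PowerSeries.order_mul, hCq, hpow, hdq, zero_add]
  have h2 : (PowerSeries.C c * y).order = ((q + 1 : ℕ) : ℕ∞) := by
    rw [PowerSeries.order_mul, hC, ← hd, hdq, zero_add]
  have hlt : q + 1 < q * (q + 1) := by nlinarith
  have hneq2 : (PowerSeries.C (c ^ q) * y ^ q).order ≠ (PowerSeries.C c * y).order := by
    rw [h1, h2]
    exact fun e => hlt.ne' (by exact_mod_cast e)
  rw [PowerSeries.order_add_of_order_ne _ _ hneq2, h1, h2]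
  exact min_eq_right (by exact_mod_cast hlt.le)
end

section
/- Let q be a prime power, K a finite field with q² elements, and b ∈ K with b ≠ 0. Then the number of pairs (x,y) ∈ K × K with x^{q+1} = b·y^q + b^q·y is exactly q³. -/
open Finset Polynomial

/-- The affine Hermitian curve `x^{q+1} = b·y^q + b^q·y` (with `b ≠ 0`) has exactly `q³` points
in `K × K`, where `K` is the field with `q²` elements. -/
theorem hermitian_curve_affine_card
    (q : ℕ) (hq : IsPrimePow q)
    (K : Type*) [Field K] [Fintype K] (hK : Fintype.card K = q ^ 2)
    (b : K) (hb : b ≠ 0) :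
    {s : K × K | s.1 ^ (q + 1) = b * s.2 ^ q + b ^ q * s.2}.ncard = q ^ 3 := by
  classical
  have hq2 : 2 ≤ q := hq.two_le
  have hq0 : 0 < q := by omega
  -- characteristic
  obtain ⟨p, k, hp, hk, hpk⟩ := hq
  haveI hpfact : Fact p.Prime := ⟨Nat.prime_iff.mpr hp⟩
  haveI : CharP K (ringChar K) := ringChar.charP K
  obtain ⟨n, hrp, hcard⟩ := FiniteField.card K (ringChar K)
  have hring : ringChar K = p := by
    have hdvd : ringChar K ∣ p := by
      have h1 : (ringChar K) ∣ q ^ 2 := by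
        rw [← hK, hcard]
        exact dvd_pow_self _ (by exact_mod_cast n.pos.ne')
      rw [← hpk, ← pow_mul] at h1
      exact (Nat.Prime.prime hrp).dvd_of_dvd_pow h1
    exact (Nat.prime_dvd_prime_iff_eq hrp hpfact.out).mp hdvd
  haveI : CharP K p := by rw [← hring]; infer_instance
  have hfrob : ∀ x y : K, (x + y) ^ q = x ^ q + y ^ q := by
    intro x y; rw [← hpk]; exact add_pow_char_pow ..
  have hKpow : ∀ x : K, x ^ q ^ 2 = x := fun x => by rw [← hK]; exact FiniteField.pow_card x
  have hqq : ∀ x : K, (x ^ q) ^ q = x := fun x => by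
    rw [← pow_mul, show q * q = q ^ 2 by ring]; exact hKpow x
  -- the additive map f(y) = b y^q + b^q y
  set F : K →+ K := AddMonoidHom.mk' (fun y => b * y ^ q + b ^ q * y)
    (fun y z => by simp only [hfrob]; ring) with hF
  have hFapp : ∀ y : K, F y = b * y ^ q + b ^ q * y := fun y => rfl
  have hFq : ∀ y : K, (F y) ^ q = F y := by
    intro y
    rw [hFapp, hfrob, mul_pow, mul_pow, hqq, hqq]
    ring
  set Kerf : Finset K := univ.filter fun y : K => F y = 0 with hKerf
  set Root1 : Finset K := univ.filter fun x : K => x ^ (q + 1) = 1 with hRoot1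
  set Rootq1 : Finset K := univ.filter fun x : K => x ^ (q - 1) = 1 with hRootq1
  -- counting roots of x^m = a
  have hroots : ∀ (m : ℕ) (a : K), 0 < m →
      (univ.filter fun x : K => x ^ m = a).card ≤ m := by
    intro m a hm
    calc (univ.filter fun x : K => x ^ m = a).card
        ≤ (nthRoots m a).toFinset.card := by
          apply card_le_card
          intro x hx
          rw [mem_filter] at hx
          rw [Multiset.mem_toFinset, mem_nthRoots hm]
          exact hx.2
      _ ≤ Multiset.card (nthRoots m a) := Multiset.toFinset_card_le _
      _ ≤ m := card_nthRoots m a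
  -- |ker F| ≤ q
  have hker_le : Kerf.card ≤ q := by
    set g : K[X] := C b * X ^ q + C (b ^ q) * X with hg
    have hcoeff : g.coeff q = b := by
      simp only [hg, coeff_add, coeff_C_mul, coeff_X_pow, coeff_X, if_pos rfl,
        if_neg (show ¬ (1 = q) by omega)]
      simp
    have hg0 : g ≠ 0 := fun h => hb (by rw [← hcoeff, h, coeff_zero])
    have hdeg : g.natDegree ≤ q := by
      apply le_trans (natDegree_add_le _ _)
      apply max_le
      · exact le_trans (natDegree_C_mul_le _ _) (by simp)
      · exact le_trans (natDegree_C_mul_le _ _) (by simp; omega)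
    calc Kerf.card ≤ g.roots.toFinset.card := by
          apply card_le_card
          intro y hy
          rw [hKerf, mem_filter] at hy
          rw [Multiset.mem_toFinset, mem_roots hg0]
          have := hy.2
          rw [hFapp] at this
          simp [hg, IsRoot, this]
      _ ≤ Multiset.card g.roots := Multiset.toFinset_card_le _
      _ ≤ g.natDegree := card_roots' g
      _ ≤ q := hdeg
  -- additive fibers all have size |ker F|
  have hfiber_add : ∀ (c : K) (y0 : K), F y0 = c →
      (univ.filter fun y : K => F y = c).card = Kerf.card := by
    intro c y0 h0
    apply card_nbij' (fun y => y - y0) (fun y => y + y0)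
    · intro a ha
      rw [mem_coe, mem_filter] at ha
      rw [hKerf, mem_coe, mem_filter]
      refine ⟨mem_univ _, ?_⟩
      rw [map_sub, ha.2, h0, sub_self]
    · intro a ha
      rw [hKerf, mem_coe, mem_filter] at ha
      rw [mem_coe, mem_filter]
      refine ⟨mem_univ _, ?_⟩
      rw [map_add, ha.2, h0, zero_add]
    · intro a _; ring
    · intro a _; ring
  -- multiplicative fibers over nonzero values have size |Root1|
  have hfiber_mul : ∀ (c : K), c ≠ 0 → ∀ (x0 : K), x0 ^ (q + 1) = c →
      (univ.filter fun x : K => x ^ (q + 1) = c).card = Root1.card := by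
    intro c hc x0 h0
    have hx0 : x0 ≠ 0 := fun h => hc (by rw [← h0, h, zero_pow (by omega)])
    apply card_nbij' (fun x => x / x0) (fun x => x * x0)
    · intro a ha
      rw [mem_coe, mem_filter] at ha
      rw [hRoot1, mem_coe, mem_filter]
      exact ⟨mem_univ _, by rw [div_pow, ha.2, h0, div_self hc]⟩
    · intro a ha
      rw [hRoot1, mem_coe, mem_filter] at ha
      rw [mem_coe, mem_filter]
      exact ⟨mem_univ _, by rw [mul_pow, ha.2, h0, one_mul]⟩
    · intro a _; field_simp
    · intro a _; field_simp
  -- image of F decomposition: q^2 = |im F| * |ker F|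
  have hdecomp : q ^ 2 = (univ.image F).card * Kerf.card := by
    have h1 := card_eq_sum_card_image (fun y : K => F y) (univ : Finset K)
    rw [card_univ, hK] at h1
    rw [h1]
    rw [Finset.sum_congr rfl (fun c hc => ?_), sum_const, smul_eq_mul]
    obtain ⟨y0, _, hy0⟩ := mem_image.mp hc
    exact hfiber_add c y0 hy0
  have him_le : (univ.image F).card ≤ q := by
    have hsub : univ.image F ⊆ insert (0 : K) Rootq1 := by
      intro c hc
      obtain ⟨y, _, rfl⟩ := mem_image.mp hc
      rcases eq_or_ne (F y) 0 with h | h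
      · rw [h]; exact mem_insert_self _ _
      · apply mem_insert_of_mem
        rw [hRootq1, mem_filter]
        refine ⟨mem_univ _, ?_⟩
        have : F y ^ (q - 1) * F y = F y := by
          rw [← pow_succ, show q - 1 + 1 = q by omega, hFq]
        exact mul_right_cancel₀ h (by rw [this, one_mul])
    calc (univ.image F).card ≤ (insert (0 : K) Rootq1).card := card_le_card hsub
      _ ≤ Rootq1.card + 1 := card_insert_le _ _
      _ ≤ (q - 1) + 1 := by
          have := hroots (q - 1) 1 (by omega)
          rw [hRootq1]; omega
      _ = q := by omega
  have hker_eq : Kerf.card = q := by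
    have h1 : q * q ≤ q * Kerf.card := by
      calc q * q = q ^ 2 := by ring
        _ = (univ.image F).card * Kerf.card := hdecomp
        _ ≤ q * Kerf.card := Nat.mul_le_mul_right _ him_le
    exact le_antisymm hker_le (Nat.le_of_mul_le_mul_left h1 hq0)
  -- norm image decomposition
  set T : Finset K := (univ.filter fun x : K => x ≠ 0).image (fun x => x ^ (q + 1)) with hT
  have hTne : ∀ c ∈ T, c ≠ 0 := by
    intro c hc
    obtain ⟨x, hx, rfl⟩ := mem_image.mp hc
    rw [mem_filter] at hx
    exact pow_ne_zero _ hx.2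
  have hTsub : T ⊆ Rootq1 := by
    intro c hc
    obtain ⟨x, hx, rfl⟩ := mem_image.mp hc
    rw [mem_filter] at hx
    rw [hRootq1, mem_filter]
    refine ⟨mem_univ _, ?_⟩
    rw [← pow_mul, show (q + 1) * (q - 1) = q ^ 2 - 1 by
      rw [← Nat.sq_sub_sq q 1]]
    have h2 : x ^ (q ^ 2 - 1) * x = x := by
      rw [← pow_succ, Nat.sub_add_cancel (Nat.one_le_pow 2 q hq0), hKpow]
    exact mul_right_cancel₀ hx.2 (by rw [h2, one_mul])
  have hTdecomp : q ^ 2 - 1 = T.card * Root1.card := by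
    have hcardne : (univ.filter fun x : K => x ≠ 0).card = q ^ 2 - 1 := by
      rw [filter_ne', card_erase_of_mem (mem_univ _), card_univ, hK]
    have h1 := card_eq_sum_card_image (fun x : K => x ^ (q + 1))
      (univ.filter fun x : K => x ≠ 0)
    rw [hcardne] at h1
    rw [h1, ← hT]
    rw [Finset.sum_congr rfl (fun c hc => ?_), sum_const, smul_eq_mul]
    have hc0 : c ≠ 0 := hTne c hc
    obtain ⟨x0, hx0, hx0c⟩ := mem_image.mp hc
    rw [mem_filter] at hx0
    have heq : ((univ.filter fun x : K => x ≠ 0).filter fun x => x ^ (q + 1) = c)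
        = univ.filter fun x : K => x ^ (q + 1) = c := by
      rw [filter_filter]
      apply filter_congr
      intro x _
      constructor
      · exact fun h => h.2
      · intro h
        refine ⟨fun h0 => hc0 ?_, h⟩
        rw [← h, h0, zero_pow (by omega)]
    rw [heq]
    exact hfiber_mul c hc0 x0 hx0c
  have hT_le : T.card ≤ q - 1 := by
    have h := hroots (q - 1) 1 (by omega)
    rw [← hRootq1] at h
    exact le_trans (card_le_card hTsub) h
  have hRoot1_le : Root1.card ≤ q + 1 := by
    have h := hroots (q + 1) 1 (by omega)
    rw [← hRoot1] at h
    exact h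
  have hq21 : (q - 1) * (q + 1) = q ^ 2 - 1 := by
    rw [mul_comm, ← Nat.sq_sub_sq q 1]
  have hRoot1_eq : Root1.card = q + 1 := by
    refine le_antisymm hRoot1_le ?_
    have h1 : (q - 1) * (q + 1) ≤ (q - 1) * Root1.card := by
      rw [hq21, hTdecomp]
      exact Nat.mul_le_mul_right _ hT_le
    exact Nat.le_of_mul_le_mul_left h1 (by omega)
  have hT_eq : T.card = q - 1 := by
    have h1 : T.card * (q + 1) = (q - 1) * (q + 1) := by
      rw [hq21, hTdecomp, hRoot1_eq]
    exact Nat.eq_of_mul_eq_mul_right (by omega) h1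
  have hTfull : T = Rootq1 := by
    apply eq_of_subset_of_card_le hTsub
    have h := hroots (q - 1) 1 (by omega)
    rw [← hRootq1] at h
    omega
  -- the norm fiber count over nonzero c with c^q = c
  have hnormfiber : ∀ c : K, c ≠ 0 → c ^ q = c →
      (univ.filter fun x : K => x ^ (q + 1) = c).card = q + 1 := by
    intro c hc hcq
    have hcmem : c ∈ Rootq1 := by
      rw [hRootq1, mem_filter]
      refine ⟨mem_univ _, ?_⟩
      have : c ^ (q - 1) * c = c := by
        rw [← pow_succ, show q - 1 + 1 = q by omega, hcq]
      exact mul_right_cancel₀ hc (by rw [this, one_mul])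
    rw [← hTfull] at hcmem
    obtain ⟨x0, _, hx0c⟩ := mem_image.mp hcmem
    rw [hfiber_mul c hc x0 hx0c, hRoot1_eq]
  -- main count
  rw [Set.ncard_eq_toFinset_card']
  have hset : {s : K × K | s.1 ^ (q + 1) = b * s.2 ^ q + b ^ q * s.2}.toFinset
      = univ.filter fun s : K × K => s.1 ^ (q + 1) = b * s.2 ^ q + b ^ q * s.2 := by
    ext s; simp [Set.mem_toFinset]
  rw [hset]
  rw [card_eq_sum_card_fiberwise (f := Prod.snd) (t := (univ : Finset K))
    (fun _ _ => mem_univ _)]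
  have hterm : ∀ y : K,
      ((univ.filter fun s : K × K => s.1 ^ (q + 1) = b * s.2 ^ q + b ^ q * s.2).filter
        fun s => s.2 = y).card
      = (univ.filter fun x : K => x ^ (q + 1) = F y).card := by
    intro y
    apply card_nbij' (fun s => s.1) (fun x => (x, y))
    · intro a ha
      simp only [mem_coe, mem_filter, mem_univ, true_and] at ha ⊢
      rw [hFapp, ← ha.2]
      exact ha.1
    · intro a ha
      simp only [mem_coe, mem_filter, mem_univ, true_and] at ha ⊢
      rw [hFapp] at ha
      exact ⟨ha, trivial⟩
    · intro a ha
      simp only [mem_coe, mem_filter, mem_univ, true_and] at ha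
      rw [← ha.2]
    · intro a _; rfl
  rw [Finset.sum_congr rfl (fun y _ => hterm y)]
  rw [← sum_filter_add_sum_filter_not univ (fun y : K => F y = 0)]
  have hsum1 : ∑ y ∈ univ.filter (fun y : K => F y = 0),
      (univ.filter fun x : K => x ^ (q + 1) = F y).card = q := by
    rw [Finset.sum_congr rfl (fun y hy => ?_), sum_const, smul_eq_mul]
    · rw [← hKerf, hker_eq, mul_one]
    · rw [mem_filter] at hy
      rw [hy.2]
      have : (univ.filter fun x : K => x ^ (q + 1) = 0) = {(0 : K)} := by
        ext x
        simp [pow_eq_zero_iff (show q + 1 ≠ 0 by omega)]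
      rw [this, card_singleton]
  have hsum2 : ∑ y ∈ univ.filter (fun y : K => ¬ F y = 0),
      (univ.filter fun x : K => x ^ (q + 1) = F y).card = (q ^ 2 - q) * (q + 1) := by
    rw [Finset.sum_congr rfl (fun y hy => ?_), sum_const, smul_eq_mul]
    · congr 1
      have h1 := card_filter_add_card_filter_not (s := (univ : Finset K))
        (p := fun y : K => F y = 0)
      rw [card_univ, hK, ← hKerf] at h1
      omega
    · rw [mem_filter] at hy
      exact hnormfiber (F y) hy.2 (hFq y)
  rw [hsum1, hsum2]
  have e1 : (q ^ 2 - q) * (q + 1) = q ^ 2 * (q + 1) - q * (q + 1) := Nat.sub_mul _ _ _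
  have e2 : q ^ 2 * (q + 1) = q ^ 3 + q ^ 2 := by ring
  have e3 : q * (q + 1) = q ^ 2 + q := by ring
  have e4 : q ≤ q ^ 3 := Nat.le_self_pow (by omega) q
  have e5 : q ≤ q ^ 2 := Nat.le_self_pow (by omega) q
  rw [e1, e2, e3]
  omega
end

section
/- Let q be a prime power, K a finite field with q² elements, λ a generator of K*, G the group generated by g(x,y) = (λx, λ^{q+1}y) acting on K × K, and b ∈ K*. Set S_b = {(x,y) ∈ K × K : (x,y) ≠ (0,0) and x^{q+1} = b·y^q + b^q·y}. Then S_b is G-invariant and is the disjoint union of exactly q + 1 G-orbits: one orbit of size q − 1 consisting of the points of S_b with x = 0, and q orbits of size q² − 1 consisting of points with x ≠ 0. -/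
def gPerm {K : Type*} [Field K] (q : ℕ) (u : Kˣ) : Equiv.Perm (K × K) :=
  Equiv.prodCongr (MulAction.toPerm u) (MulAction.toPerm (u ^ (q + 1)))

def gGroup {K : Type*} [Field K] (q : ℕ) (u : Kˣ) : Subgroup (Equiv.Perm (K × K)) :=
  Subgroup.zpowers (gPerm q u)

section Aux
variable {K : Type*} [Field K]

/-- The homomorphism `w ↦ ((x,y) ↦ (wx, w^{q+1}y))`. -/
def gHom (q : ℕ) : Kˣ →* Equiv.Perm (K × K) where
  toFun w := Equiv.prodCongr (MulAction.toPerm w) (MulAction.toPerm (w ^ (q + 1)))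
  map_one' := by
    ext s <;> simp
  map_mul' a c := by
    ext s <;> simp [mul_pow, mul_smul]

lemma gHom_apply (q : ℕ) (w : Kˣ) (s : K × K) :
    gHom q w s = ((w : K) * s.1, (w : K) ^ (q + 1) * s.2) := by
  cases s
  simp [gHom, Units.smul_def]

lemma gPerm_zpow_apply (q : ℕ) (u : Kˣ) (k : ℤ) (s : K × K) :
    ((gPerm q u) ^ k) s = ((↑(u ^ k) : K) * s.1, (↑(u ^ k) : K) ^ (q + 1) * s.2) := by
  have h : gPerm q u = gHom q u := rfl
  rw [h, ← map_zpow, gHom_apply]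

lemma orbit_eq (q : ℕ) (u : Kˣ) (hu : ∀ x : Kˣ, x ∈ Subgroup.zpowers u) (s : K × K) :
    MulAction.orbit (gGroup q u) s
      = Set.range (fun w : Kˣ => ((w : K) * s.1, (w : K) ^ (q + 1) * s.2)) := by
  ext t
  constructor
  · rintro ⟨⟨σ, hσ⟩, rfl⟩
    obtain ⟨k, hk⟩ := Subgroup.mem_zpowers_iff.mp hσ
    refine ⟨u ^ k, ?_⟩
    show _ = (⟨σ, hσ⟩ : gGroup q u) • s
    have h2 : (⟨σ, hσ⟩ : gGroup q u) • s = σ s := rfl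
    rw [h2, ← hk, gPerm_zpow_apply]
  · rintro ⟨w, rfl⟩
    obtain ⟨k, hk⟩ := Subgroup.mem_zpowers_iff.mp (hu w)
    refine ⟨⟨(gPerm q u) ^ k, Subgroup.zpow_mem _ (Subgroup.mem_zpowers _) k⟩, ?_⟩
    show ((gPerm q u) ^ k) s = _
    rw [gPerm_zpow_apply, hk]

end Aux

/-- The punctured affine Hermitian curve `S_b` is invariant under
`G = ⟨(x,y) ↦ (λx, λ^{q+1}y)⟩` and splits into exactly `q + 1` `G`-orbits: one orbit of size
`q - 1` consisting of its points with `x = 0`, and `q` orbits of size `q² - 1` consisting of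
points with `x ≠ 0`. -/
theorem hermitian_curve_orbit_decomposition
    (q : ℕ) (hq : IsPrimePow q)
    (K : Type*) [Field K] [Fintype K] (hK : Fintype.card K = q ^ 2)
    (u : Kˣ) (hu : ∀ x : Kˣ, x ∈ Subgroup.zpowers u)
    (b : K) (hb : b ≠ 0) :
    ∀ S : Set (K × K), S = {s : K × K | s ≠ (0, 0) ∧
        s.1 ^ (q + 1) = b * s.2 ^ q + b ^ q * s.2} →
      (∀ σ ∈ gGroup q u, ∀ s ∈ S, σ s ∈ S) ∧
      (∀ s ∈ S, MulAction.orbit (gGroup q u) s ⊆ S) ∧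
      {O : Set (K × K) | ∃ s ∈ S, O = MulAction.orbit (gGroup q u) s}.ncard = q + 1 ∧
      (∀ s ∈ S, s.1 = 0 → (MulAction.orbit (gGroup q u) s).ncard = q - 1) ∧
      {O : Set (K × K) | ∃ s ∈ S, s.1 = 0 ∧ O = MulAction.orbit (gGroup q u) s}.ncard = 1 ∧
      (∀ s ∈ S, s.1 ≠ 0 → (MulAction.orbit (gGroup q u) s).ncard = q ^ 2 - 1) ∧
      {O : Set (K × K) | ∃ s ∈ S, s.1 ≠ 0 ∧ O = MulAction.orbit (gGroup q u) s}.ncard = q := by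
  classical
  intro S hS
  have hq2 : 2 ≤ q := hq.two_le
  have hq21 : 1 ≤ q ^ 2 := Nat.one_le_pow _ _ (by omega)
  -- characteristic
  obtain ⟨p0, k0, hp0, hk0, hq0⟩ := hq
  replace hp0 : Nat.Prime p0 := Nat.prime_iff.mpr hp0
  have hcharP : CharP K (ringChar K) := ringChar.charP K
  have hpprime : (ringChar K).Prime := CharP.char_is_prime K (ringChar K)
  obtain ⟨n, _, hcard⟩ := FiniteField.card K (ringChar K)
  have hp0r : p0 = ringChar K := by
    have h1 : p0 ∣ (ringChar K) ^ (n : ℕ) := by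
      rw [← hcard, hK, ← hq0]
      exact dvd_pow (dvd_pow_self p0 (by omega)) (by omega)
    have h2 : p0 ∣ ringChar K := hp0.dvd_of_dvd_pow h1
    exact (Nat.prime_dvd_prime_iff_eq hp0 hpprime).mp h2
  have hqq : q = ringChar K ^ k0 := by rw [← hp0r, hq0]
  haveI : Fact (ringChar K).Prime := ⟨hpprime⟩
  have hfrob : ∀ x y : K, (x + y) ^ q = x ^ q + y ^ q := by
    intro x y
    rw [hqq]
    exact add_pow_char_pow x y _ _
  have hpowcard : ∀ x : K, x ^ (q ^ 2) = x := fun x => by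
    rw [← hK]; exact FiniteField.pow_card x
  have hcardu : Fintype.card Kˣ = q ^ 2 - 1 := by rw [Fintype.card_units, hK]
  have horder : orderOf u = q ^ 2 - 1 := by
    rw [orderOf_eq_card_of_forall_mem_zpowers hu, Nat.card_eq_fintype_card, hcardu]
  have hu1 : ∀ w : Kˣ, w ^ (q ^ 2 - 1) = 1 := fun w => by
    rw [← hcardu]; exact pow_card_eq_one
  have harith : (q + 1) * (q - 1) = q ^ 2 - 1 := by
    zify [hq21, show 1 ≤ q by omega]; ring
  have hdvd : (q + 1) ∣ q ^ 2 - 1 := ⟨q - 1, harith.symm⟩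
  have horder2 : orderOf (u ^ (q + 1)) = q - 1 := by
    rw [orderOf_pow, horder, Nat.gcd_eq_right hdvd, ← harith,
      Nat.mul_div_cancel_left _ (by omega)]
  have hscale : ∀ w : Kˣ, ((w : K)) ^ ((q + 1) * q) = (w : K) ^ (q + 1) := by
    intro w
    have h1 : (q + 1) * q = (q ^ 2 - 1) + (q + 1) := by
      zify [hq21]; ring
    have h2 : ((w : K)) ^ (q ^ 2 - 1) = 1 := by
      have := congrArg (Units.val) (hu1 w)
      push_cast at this
      exact this
    rw [h1, pow_add, h2, one_mul]
  -- the scaled point stays on the curve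
  have hmapS : ∀ w : Kˣ, ∀ s : K × K, s ∈ S →
      ((w : K) * s.1, (w : K) ^ (q + 1) * s.2) ∈ S := by
    intro w s hs
    rw [hS] at hs ⊢
    obtain ⟨hne, heq⟩ := hs
    constructor
    · intro h
      rw [Prod.ext_iff] at h
      simp only at h
      apply hne
      rw [Prod.ext_iff]
      constructor
      · rcases mul_eq_zero.mp h.1 with h' | h'
        · exact absurd h' (Units.ne_zero w)
        · exact h'
      · rcases mul_eq_zero.mp h.2 with h' | h'
        · exact absurd h' (pow_ne_zero _ (Units.ne_zero w))
        · exact h'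
    · show ((w : K) * s.1) ^ (q + 1)
        = b * ((w : K) ^ (q + 1) * s.2) ^ q + b ^ q * ((w : K) ^ (q + 1) * s.2)
      rw [mul_pow, heq, mul_pow, ← pow_mul, hscale w]
      ring
  -- invariance
  have bullet1 : ∀ σ ∈ gGroup q u, ∀ s ∈ S, σ s ∈ S := by
    intro σ hσ s hs
    have hσ' : σ ∈ Subgroup.zpowers (gPerm q u) := hσ
    obtain ⟨k, hk⟩ := Subgroup.mem_zpowers_iff.mp hσ'
    rw [← hk, gPerm_zpow_apply]
    exact hmapS (u ^ k) s hs
  have bullet2 : ∀ s ∈ S, MulAction.orbit (gGroup q u) s ⊆ S := by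
    intro s hs t ht
    rw [orbit_eq q u hu] at ht
    obtain ⟨w, rfl⟩ := ht
    exact hmapS w s hs
  -- orbit cardinality, x ≠ 0 case
  have horbcard1 : ∀ s : K × K, s.1 ≠ 0 →
      (MulAction.orbit (gGroup q u) s).ncard = q ^ 2 - 1 := by
    intro s hs1
    rw [orbit_eq q u hu]
    have hinj : Function.Injective
        (fun w : Kˣ => ((w : K) * s.1, (w : K) ^ (q + 1) * s.2)) := by
      intro a c h
      have h1 : (a : K) * s.1 = (c : K) * s.1 := congrArg Prod.fst h
      exact Units.ext (mul_right_cancel₀ hs1 h1)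
    rw [← Set.image_univ, Set.ncard_image_of_injective _ hinj, Set.ncard_univ,
      Nat.card_eq_fintype_card, hcardu]
  -- orbit cardinality, x = 0 case
  have horbcard0 : ∀ s : K × K, s.1 = 0 → s.2 ≠ 0 →
      (MulAction.orbit (gGroup q u) s).ncard = q - 1 := by
    intro s h1 h2
    rw [orbit_eq q u hu]
    have hre : Set.range (fun w : Kˣ => ((w : K) * s.1, (w : K) ^ (q + 1) * s.2))
        = (fun z : Kˣ => ((0 : K), (z : K) * s.2)) ''
            ((Subgroup.zpowers (u ^ (q + 1)) : Subgroup Kˣ) : Set Kˣ) := by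
      ext t
      simp only [Set.mem_range, Set.mem_image, SetLike.mem_coe]
      constructor
      · rintro ⟨w, rfl⟩
        obtain ⟨k, hk⟩ := Subgroup.mem_zpowers_iff.mp (hu w)
        refine ⟨w ^ (q + 1), ?_, ?_⟩
        · refine Subgroup.mem_zpowers_iff.mpr ⟨k, ?_⟩
          rw [← hk, ← zpow_natCast u (q + 1), ← zpow_mul, ← zpow_natCast (u ^ k) (q + 1),
            ← zpow_mul, mul_comm]
        · rw [h1, mul_zero]
          push_cast
          rfl
      · rintro ⟨z, hz, rfl⟩
        obtain ⟨k, hk⟩ := Subgroup.mem_zpowers_iff.mp hz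
        refine ⟨u ^ k, ?_⟩
        rw [h1, mul_zero]
        have : ((u ^ k : Kˣ) : K) ^ (q + 1) = (z : K) := by
          rw [← hk, ← Units.val_pow_eq_pow_val, ← zpow_natCast (u ^ k) (q + 1), ← zpow_mul,
            ← zpow_natCast u (q + 1), ← zpow_mul, mul_comm]
        rw [this]
    have hinj2 : Function.Injective (fun z : Kˣ => ((0 : K), (z : K) * s.2)) := by
      intro a c h
      have h1 : (a : K) * s.2 = (c : K) * s.2 := congrArg Prod.snd h
      exact Units.ext (mul_right_cancel₀ h2 h1)
    rw [hre, Set.ncard_image_of_injective _ hinj2, ← Nat.card_coe_set_eq,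
      SetLike.coe_sort_coe, Nat.card_zpowers, horder2]
  -- construct a nonzero solution of b y^q + b^q y = 0
  have hq1 : q - 1 + 1 = q := by omega
  set bu : Kˣ := Units.mk0 b hb with hbu
  have hneg1 : ((-1 : Kˣ)) ^ (q + 1) = 1 := by
    rcases eq_or_ne (ringChar K) 2 with h2 | h2
    · have hC2 : CharP K 2 := h2 ▸ hcharP
      have hK2 : (-1 : K) = 1 := by
        haveI := hC2
        exact CharTwo.neg_eq 1
      have : (-1 : Kˣ) = 1 := Units.ext (by
        rw [Units.val_neg, Units.val_one, hK2])
      rw [this, one_pow]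
    · have hodd : Odd q := by
        rw [hqq]
        exact (hpprime.odd_of_ne_two h2).pow
      have heven : Even (q + 1) := Odd.add_one hodd
      exact heven.neg_one_pow
  have hc : (-(bu ^ (q - 1))) ^ (q + 1) = 1 := by
    rw [neg_pow, hneg1, one_mul, ← pow_mul, mul_comm (q-1) (q+1), harith, hu1]
  obtain ⟨m, hm⟩ := Subgroup.mem_zpowers_iff.mp (hu (-(bu ^ (q - 1))))
  have hdvdm : ((q : ℤ) - 1) ∣ m := by
    have h1 : u ^ (m * (q + 1)) = 1 := by
      rw [zpow_mul, hm, show ((q : ℤ) + 1) = ((q + 1 : ℕ) : ℤ) by push_cast; ring,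
        zpow_natCast, hc]
    have h2 : ((orderOf u : ℤ)) ∣ m * (q + 1) := orderOf_dvd_iff_zpow_eq_one.mpr h1
    rw [horder] at h2
    have h3 : ((q : ℤ) - 1) * ((q : ℤ) + 1) ∣ m * ((q : ℤ) + 1) := by
      have : ((q ^ 2 - 1 : ℕ) : ℤ) = ((q : ℤ) - 1) * ((q : ℤ) + 1) := by
        push_cast [hq21]
        ring
      rw [this] at h2
      exact h2
    exact (mul_dvd_mul_iff_right (by positivity : ((q : ℤ) + 1) ≠ 0)).mp h3
  obtain ⟨j, hj⟩ := hdvdm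
  set y0u : Kˣ := u ^ j with hy0u
  have hy0 : y0u ^ (q - 1) = -(bu ^ (q - 1)) := by
    rw [hy0u, ← hm, hj, ← zpow_natCast (u ^ j) (q - 1), ← zpow_mul]
    congr 1
    push_cast [show 1 ≤ q by omega]
    ring
  set y₀ : K := (y0u : K) with hy₀
  have hy₀ne : y₀ ≠ 0 := Units.ne_zero y0u
  have hy0K : y₀ ^ (q - 1) = -(b ^ (q - 1)) := by
    have := congrArg Units.val hy0
    rw [Units.val_pow_eq_pow_val, Units.val_neg, Units.val_pow_eq_pow_val] at this
    exact this
  have hy0eq : b * y₀ ^ q + b ^ q * y₀ = 0 := by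
    have hyq : y₀ ^ q = -(b ^ (q - 1)) * y₀ := by
      rw [← hq1, pow_succ, hy0K, hq1]
    have hbq : b ^ q = b ^ (q - 1) * b := by rw [← pow_succ, hq1]
    rw [hyq, hbq]
    ring
  set s₀ : K × K := ((0 : K), y₀) with hs₀
  have hs₀S : s₀ ∈ S := by
    rw [hS]
    refine ⟨?_, ?_⟩
    · intro h
      rw [Prod.ext_iff] at h
      exact hy₀ne h.2
    · show (0 : K) ^ (q + 1) = b * y₀ ^ q + b ^ q * y₀
      rw [zero_pow (by omega), hy0eq]
  -- s ∈ S with s.1 = 0 has s.2 ≠ 0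
  have hsnd : ∀ s ∈ S, s.1 = 0 → s.2 ≠ 0 := by
    intro s hs h0 h2
    rw [hS] at hs
    exact hs.1 (Prod.ext_iff.mpr ⟨h0, h2⟩)
  -- every x = 0 point of S is in the orbit of s₀
  have hmem0 : ∀ s ∈ S, s.1 = 0 → s ∈ MulAction.orbit (gGroup q u) s₀ := by
    intro s hs h0
    have hy : s.2 ≠ 0 := hsnd s hs h0
    have heqs : b * s.2 ^ q + b ^ q * s.2 = 0 := by
      rw [hS] at hs
      have := hs.2
      rw [h0, zero_pow (by omega : q + 1 ≠ 0)] at this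
      exact this.symm
    -- (s.2 / y₀) ^ (q-1) = 1
    set yu : Kˣ := Units.mk0 s.2 hy with hyu
    set z : Kˣ := yu * y0u⁻¹ with hz
    have hzq : z ^ q = z := by
      have hmain : s.2 ^ q * y₀ = y₀ ^ q * s.2 := by
        have e1 : b * (s.2 ^ q * y₀) = b * (y₀ ^ q * s.2) := by
          have d1 : b * s.2 ^ q = -(b ^ q * s.2) := by linear_combination heqs
          have d2 : b * y₀ ^ q = -(b ^ q * y₀) := by linear_combination hy0eq
          calc b * (s.2 ^ q * y₀) = (b * s.2 ^ q) * y₀ := by ring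
            _ = -(b ^ q * s.2) * y₀ := by rw [d1]
            _ = -(b ^ q * y₀) * s.2 := by ring
            _ = (b * y₀ ^ q) * s.2 := by rw [d2]
            _ = b * (y₀ ^ q * s.2) := by ring
        exact mul_left_cancel₀ hb e1
      have hzv : (z : K) = s.2 * y₀⁻¹ := by
        rw [hz, Units.val_mul]
        congr 1
        exact Units.val_inv_eq_inv_val y0u
      apply Units.ext
      rw [Units.val_pow_eq_pow_val, hzv, mul_pow, inv_pow]
      field_simp
      linear_combination hmain
    have hz1 : z ^ (q - 1) = 1 := by
      have : z ^ (q - 1) * z = z := by rw [← pow_succ, hq1, hzq]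
      exact mul_right_cancel (this.trans (one_mul z).symm)
    obtain ⟨m', hm'⟩ := Subgroup.mem_zpowers_iff.mp (hu z)
    have hdvdm' : ((q : ℤ) + 1) ∣ m' := by
      have h1 : u ^ (m' * ((q : ℤ) - 1)) = 1 := by
        rw [zpow_mul, hm', show ((q : ℤ) - 1) = ((q - 1 : ℕ) : ℤ) by
          push_cast [show 1 ≤ q by omega]; ring, zpow_natCast, hz1]
      have h2 : ((orderOf u : ℤ)) ∣ m' * ((q : ℤ) - 1) := orderOf_dvd_iff_zpow_eq_one.mpr h1
      rw [horder] at h2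
      have h3 : ((q : ℤ) + 1) * ((q : ℤ) - 1) ∣ m' * ((q : ℤ) - 1) := by
        have : ((q ^ 2 - 1 : ℕ) : ℤ) = ((q : ℤ) + 1) * ((q : ℤ) - 1) := by
          push_cast [hq21]
          ring
        rw [this] at h2
        exact h2
      have hne : ((q : ℤ) - 1) ≠ 0 := by
        have : (2 : ℤ) ≤ (q : ℤ) := by exact_mod_cast hq2
        omega
      exact (mul_dvd_mul_iff_right hne).mp h3
    obtain ⟨j', hj'⟩ := hdvdm'
    set w : Kˣ := u ^ j' with hw
    have hwq : ((w : K)) ^ (q + 1) = (z : K) := by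
      rw [← hm', hj', hw, ← Units.val_pow_eq_pow_val]
      congr 1
      rw [← zpow_natCast (u ^ j') (q + 1), ← zpow_mul]
      congr 1
      push_cast
      ring
    rw [orbit_eq q u hu]
    refine ⟨w, ?_⟩
    have hfst : (w : K) * s₀.1 = s.1 := by
      rw [hs₀, h0]
      simp
    have hsnd' : (w : K) ^ (q + 1) * s₀.2 = s.2 := by
      show (w : K) ^ (q + 1) * y₀ = s.2
      have hzv : (z : K) = s.2 * y₀⁻¹ := by
        rw [hz, Units.val_mul]
        congr 1
        exact Units.val_inv_eq_inv_val y0u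
      rw [hwq, hzv]
      field_simp
    exact Prod.ext_iff.mpr ⟨hfst, hsnd'⟩
  have horbeq0 : ∀ s ∈ S, s.1 = 0 →
      MulAction.orbit (gGroup q u) s = MulAction.orbit (gGroup q u) s₀ :=
    fun s hs h0 => MulAction.orbit_eq_iff.mpr (hmem0 s hs h0)
  -- goal 5 set
  have hset0 : {O : Set (K × K) | ∃ s ∈ S, s.1 = 0 ∧ O = MulAction.orbit (gGroup q u) s}
      = {MulAction.orbit (gGroup q u) s₀} := by
    ext O
    simp only [Set.mem_setOf_eq, Set.mem_singleton_iff]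
    constructor
    · rintro ⟨s, hs, h0, rfl⟩
      exact horbeq0 s hs h0
    · rintro rfl
      exact ⟨s₀, hs₀S, rfl, rfl⟩
  -- counting solutions
  have horbs₀ : (MulAction.orbit (gGroup q u) s₀).ncard = q - 1 := horbcard0 s₀ rfl hy₀ne
  set Y0 : Set K := {y : K | y ≠ 0 ∧ b * y ^ q + b ^ q * y = 0} with hY0
  have hY0img : (fun y : K => ((0 : K), y)) '' Y0 = MulAction.orbit (gGroup q u) s₀ := by
    ext t
    constructor
    · rintro ⟨y, ⟨hy1, hy2⟩, rfl⟩
      have htS : ((0 : K), y) ∈ S := by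
        rw [hS]
        refine ⟨fun h => hy1 (Prod.ext_iff.mp h).2, ?_⟩
        show (0 : K) ^ (q + 1) = b * y ^ q + b ^ q * y
        rw [zero_pow (by omega : q + 1 ≠ 0), hy2]
      exact hmem0 _ htS rfl
    · intro ht
      have htS : t ∈ S := bullet2 s₀ hs₀S ht
      have ht1 : t.1 = 0 := by
        rw [orbit_eq q u hu] at ht
        obtain ⟨w, rfl⟩ := ht
        show (w : K) * s₀.1 = 0
        rw [hs₀]
        simp
      refine ⟨t.2, ⟨hsnd t htS ht1, ?_⟩, ?_⟩
      · rw [hS] at htS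
        have h2 := htS.2
        rw [ht1, zero_pow (by omega : q + 1 ≠ 0)] at h2
        exact h2.symm
      · exact Prod.ext_iff.mpr ⟨ht1.symm, rfl⟩
  have hY0card : Y0.ncard = q - 1 := by
    have hinj : Function.Injective (fun y : K => ((0 : K), y)) := by
      intro a c h
      exact (Prod.ext_iff.mp h).2
    rw [← Set.ncard_image_of_injective Y0 hinj, hY0img, horbs₀]
  set N : Set K := {y : K | b * y ^ q + b ^ q * y = 0} with hN
  have hNins : N = insert (0 : K) Y0 := by
    ext y
    simp only [hN, hY0, Set.mem_insert_iff, Set.mem_setOf_eq]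
    constructor
    · intro h
      by_cases h0 : y = 0
      · exact Or.inl h0
      · exact Or.inr ⟨h0, h⟩
    · rintro (rfl | ⟨_, h⟩)
      · simp [zero_pow (by omega : q ≠ 0)]
      · exact h
  have hNcard : N.ncard = q := by
    rw [hNins, Set.ncard_insert_of_notMem (fun h => h.1 rfl) (Set.toFinite _), hY0card]
    omega
  set ψ : K → K := fun y => b * y ^ q + b ^ q * y with hψ
  have hψadd : ∀ x y : K, ψ (x + y) = ψ x + ψ y := by
    intro x y
    simp only [hψ]
    rw [hfrob]
    ring
  set Nf : Finset K := Finset.univ.filter (fun y => ψ y = 0) with hNf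
  have hNfcard : Nf.card = q := by
    have he : N.toFinset = Nf := by
      ext y
      simp [hNf, hN, hψ, Set.mem_toFinset]
    rw [← he, ← Set.ncard_eq_toFinset_card', hNcard]
  have hfib : ∀ y : K, (Finset.univ.filter (fun w => ψ w = ψ y)).card = q := by
    intro y
    have himg : Finset.univ.filter (fun w => ψ w = ψ y) = Nf.image (fun n => y + n) := by
      ext w
      simp only [Finset.mem_filter, Finset.mem_univ, true_and, Finset.mem_image, hNf]
      constructor
      · intro h
        refine ⟨w - y, ?_, by ring⟩
        have h2 : ψ (y + (w - y)) = ψ y + ψ (w - y) := hψadd _ _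
        rw [show y + (w - y) = w by ring, h] at h2
        exact (left_eq_add.mp h2)
      · rintro ⟨n, hn, rfl⟩
        rw [hψadd y n, hn, add_zero]
    rw [himg, Finset.card_image_of_injective _ (add_right_injective y), hNfcard]
  set Iψ : Finset K := Finset.univ.image ψ with hIψ
  have hIψcard : Iψ.card = q := by
    have hsum : (Finset.univ : Finset K).card
        = ∑ z ∈ Iψ, (Finset.univ.filter (fun w => ψ w = z)).card :=
      Finset.card_eq_sum_card_image ψ Finset.univ
    have hsum2 : ∑ z ∈ Iψ, (Finset.univ.filter (fun w => ψ w = z)).card = Iψ.card * q := by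
      rw [Finset.sum_congr rfl (fun z hz => ?_), Finset.sum_const, smul_eq_mul]
      obtain ⟨y, _, rfl⟩ := Finset.mem_image.mp hz
      exact hfib y
    have hq2K : Iψ.card * q = q * q := by
      have : (Finset.univ : Finset K).card = q ^ 2 := by rw [Finset.card_univ, hK]
      rw [← hsum2, ← hsum, this, pow_two]
    exact Nat.eq_of_mul_eq_mul_right (by omega) hq2K
  set Ff : Finset K := Finset.univ.filter (fun z => z ^ q = z) with hFf
  have hqmul : q * q = q ^ 2 := (pow_two q).symm
  have hsubFf : Iψ ⊆ Ff := by
    intro z hz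
    obtain ⟨y, _, rfl⟩ := Finset.mem_image.mp hz
    simp only [hFf, Finset.mem_filter, Finset.mem_univ, true_and]
    have e1 : (y ^ q) ^ q = y := by rw [← pow_mul, hqmul]; exact hpowcard y
    have e2 : (b ^ q) ^ q = b := by rw [← pow_mul, hqmul]; exact hpowcard b
    show ψ y ^ q = ψ y
    simp only [hψ]
    rw [hfrob, mul_pow, mul_pow, e1, e2]
    ring
  have hFfcard : Ff.card ≤ q := by
    set P : Polynomial K := Polynomial.X ^ q - Polynomial.X with hP
    have hPdeg : P.natDegree = q := by
      rw [hP]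
      compute_degree
      · have hne : ¬ (1 = q) := by omega
        simp [hne]
      · omega
    have hPne : P ≠ 0 := fun h => by
      rw [h, Polynomial.natDegree_zero] at hPdeg
      omega
    have hroots : Ff ⊆ P.roots.toFinset := by
      intro z hz
      rw [Multiset.mem_toFinset, Polynomial.mem_roots hPne]
      simp only [hFf, Finset.mem_filter] at hz
      simp [hP, Polynomial.IsRoot, sub_eq_zero, hz.2]
    calc Ff.card ≤ P.roots.toFinset.card := Finset.card_le_card hroots
      _ ≤ Multiset.card P.roots := Multiset.toFinset_card_le _
      _ ≤ P.natDegree := Polynomial.card_roots' P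
      _ = q := hPdeg
  have hIψFf : Iψ = Ff := Finset.eq_of_subset_of_card_le hsubFf (by rw [hIψcard]; exact hFfcard)
  have h1mem : (1 : K) ∈ Iψ := by
    rw [hIψFf]
    simp [hFf]
  obtain ⟨y₁, _, hy₁⟩ := Finset.mem_image.mp h1mem
  -- the set of y with ψ y = 1 has q elements
  set C : Set K := {y : K | ψ y = 1} with hC
  have hCcard : C.ncard = q := by
    have himg : C = (fun n => y₁ + n) '' N := by
      ext y
      simp only [hC, hN, Set.mem_image, Set.mem_setOf_eq]
      constructor
      · intro h
        refine ⟨y - y₁, ?_, by ring⟩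
        have h2 : ψ (y₁ + (y - y₁)) = ψ y₁ + ψ (y - y₁) := hψadd _ _
        rw [show y₁ + (y - y₁) = y by ring, h, hy₁] at h2
        exact (left_eq_add.mp h2)
      · rintro ⟨n, hn, rfl⟩
        have := hψadd y₁ n
        rw [hy₁] at this
        show ψ (y₁ + n) = 1
        rw [this, show ψ n = 0 from hn, add_zero]
    rw [himg, Set.ncard_image_of_injective _ (add_right_injective y₁), hNcard]
  -- orbits of points with x ≠ 0 biject with C
  have hO1 : {O : Set (K × K) | ∃ s ∈ S, s.1 ≠ 0 ∧ O = MulAction.orbit (gGroup q u) s}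
      = (fun y : K => MulAction.orbit (gGroup q u) ((1 : K), y)) '' C := by
    ext O
    simp only [Set.mem_setOf_eq, Set.mem_image]
    constructor
    · rintro ⟨s, hsS, hs1, rfl⟩
      set w : Kˣ := (Units.mk0 s.1 hs1)⁻¹ with hw
      have hw1 : (w : K) * s.1 = 1 := by
        rw [hw, Units.val_inv_eq_inv_val, Units.val_mk0]
        exact inv_mul_cancel₀ hs1
      set y' : K := (w : K) ^ (q + 1) * s.2 with hy'
      have htmem : ((1 : K), y') ∈ MulAction.orbit (gGroup q u) s := by
        rw [orbit_eq q u hu]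
        exact ⟨w, Prod.ext_iff.mpr ⟨hw1, rfl⟩⟩
      have htS : ((1 : K), y') ∈ S := bullet2 s hsS htmem
      have hy'C : y' ∈ C := by
        rw [hS] at htS
        have h2 := htS.2
        simp only at h2
        rw [one_pow] at h2
        show ψ y' = 1
        exact h2.symm
      exact ⟨y', hy'C, MulAction.orbit_eq_iff.mpr htmem⟩
    · rintro ⟨y, hyC, rfl⟩
      refine ⟨((1 : K), y), ?_, one_ne_zero, rfl⟩
      rw [hS]
      refine ⟨fun h => one_ne_zero ((Prod.ext_iff.mp h).1), ?_⟩
      show (1 : K) ^ (q + 1) = b * y ^ q + b ^ q * y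
      rw [one_pow]
      exact (show ψ y = 1 from hyC).symm
  have hO1inj : Set.InjOn (fun y : K => MulAction.orbit (gGroup q u) ((1 : K), y)) C := by
    intro y hy y' hy' h
    have h' : MulAction.orbit (gGroup q u) ((1 : K), y)
        = MulAction.orbit (gGroup q u) ((1 : K), y') := h
    have hmem : ((1 : K), y) ∈ MulAction.orbit (gGroup q u) ((1 : K), y') := by
      rw [← h']
      exact MulAction.mem_orbit_self _
    rw [orbit_eq q u hu] at hmem
    obtain ⟨w, hw⟩ := hmem
    have h1 : (w : K) * 1 = 1 := congrArg Prod.fst hw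
    have h2 : (w : K) = 1 := by rwa [mul_one] at h1
    have h3 : (w : K) ^ (q + 1) * y' = y := congrArg Prod.snd hw
    rw [h2, one_pow, one_mul] at h3
    exact h3.symm
  have hO1card : {O : Set (K × K) | ∃ s ∈ S, s.1 ≠ 0
      ∧ O = MulAction.orbit (gGroup q u) s}.ncard = q := by
    rw [hO1, Set.ncard_image_of_injOn hO1inj, hCcard]
  have hset0card : {O : Set (K × K) | ∃ s ∈ S, s.1 = 0
      ∧ O = MulAction.orbit (gGroup q u) s}.ncard = 1 := by
    rw [hset0]
    exact Set.ncard_singleton _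
  -- total orbit count
  have htotal : {O : Set (K × K) | ∃ s ∈ S, O = MulAction.orbit (gGroup q u) s}.ncard
      = q + 1 := by
    have hsplit : {O : Set (K × K) | ∃ s ∈ S, O = MulAction.orbit (gGroup q u) s}
        = {O : Set (K × K) | ∃ s ∈ S, s.1 = 0 ∧ O = MulAction.orbit (gGroup q u) s}
          ∪ {O : Set (K × K) | ∃ s ∈ S, s.1 ≠ 0 ∧ O = MulAction.orbit (gGroup q u) s} := by
      ext O
      simp only [Set.mem_setOf_eq, Set.mem_union]
      constructor
      · rintro ⟨s, hsS, rfl⟩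
        by_cases h0 : s.1 = 0
        · exact Or.inl ⟨s, hsS, h0, rfl⟩
        · exact Or.inr ⟨s, hsS, h0, rfl⟩
      · rintro (⟨s, hsS, _, rfl⟩ | ⟨s, hsS, _, rfl⟩) <;> exact ⟨s, hsS, rfl⟩
    have hdisj : Disjoint
        {O : Set (K × K) | ∃ s ∈ S, s.1 = 0 ∧ O = MulAction.orbit (gGroup q u) s}
        {O : Set (K × K) | ∃ s ∈ S, s.1 ≠ 0 ∧ O = MulAction.orbit (gGroup q u) s} := by
      rw [Set.disjoint_left]
      rintro O ⟨s, hsS, h0, rfl⟩ ⟨t, htS, ht1, hOt⟩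
      have htmem : t ∈ MulAction.orbit (gGroup q u) s := by
        rw [hOt]
        exact MulAction.mem_orbit_self _
      rw [orbit_eq q u hu] at htmem
      obtain ⟨w, hw⟩ := htmem
      apply ht1
      have h1 : (w : K) * s.1 = t.1 := congrArg Prod.fst hw
      rw [h0, mul_zero] at h1
      exact h1.symm
    have hfin0 : {O : Set (K × K) | ∃ s ∈ S, s.1 = 0
        ∧ O = MulAction.orbit (gGroup q u) s}.Finite := by
      rw [hset0]
      exact Set.finite_singleton _
    have hfin1 : {O : Set (K × K) | ∃ s ∈ S, s.1 ≠ 0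
        ∧ O = MulAction.orbit (gGroup q u) s}.Finite := by
      rw [hO1]
      exact (Set.toFinite C).image _
    rw [hsplit, Set.ncard_union_eq hdisj hfin0 hfin1, hset0card, hO1card]
    omega
  exact ⟨bullet1, bullet2, htotal,
    fun s hs h0 => horbcard0 s h0 (hsnd s hs h0),
    hset0card,
    fun s _ h1 => horbcard1 s h1,
    hO1card⟩
end

section
/- Let q > 2 be a prime power, K a finite field with q² elements, λ a generator of K*, and G the group generated by g(x,y) = (λx, λ^{q+1}y) acting on K × K. Let Ω be the set of G-orbits on (K × K) \ {(0,0)} (so |Ω| = q² + q + 1). Define a family 𝓛 of subsets of Ω as follows: (i) the set of orbits contained in the line {(0,y) : y ≠ 0}; (ii) for each b ∈ K*, the set of orbits contained in S_b = {(x,y) ≠ (0,0) : x^{q+1} = b y^q + b^q y}; (iii) for each of the q+1 cosets cF_q* of F_q* in K*, the set of orbits contained in {(x,y) ≠ (0,0) : c^q y^q + c y = 0}. Then 𝓛 consists of q² + q + 1 distinct subsets, each member of 𝓛 contains exactly q + 1 orbits, any two distinct members of 𝓛 meet in exactly one orbit, and any two distinct orbits lie in exactly one common member of 𝓛; that is,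 (Ω, 𝓛) is a projective plane of order q. -/
set_option linter.unusedSectionVars false
set_option linter.unusedVariables false
set_option maxHeartbeats 1000000

namespace PPlane

variable {K : Type*} [Field K] [Fintype K]

/-- The sesquilinear trace form. -/
def Tf (q : ℕ) (b z : K) : K := b * z ^ q + b ^ q * z

lemma Tf_symm (q : ℕ) (b z : K) : Tf q b z = Tf q z b := by unfold Tf; ring

lemma Tf_zero_right (q : ℕ) (hq : 0 < q) (b : K) : Tf q b 0 = 0 := by
  simp [Tf, zero_pow hq.ne']

lemma Tf_zero_left (q : ℕ) (hq : 0 < q) (z : K) : Tf q 0 z = 0 := by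
  simp [Tf, zero_pow hq.ne']

section frob

variable {q : ℕ} (hfa : ∀ x y : K, (x + y) ^ q = x ^ q + y ^ q)
variable (hK : Fintype.card K = q ^ 2) (hq2 : 2 < q)

include hq2 in
lemma qpos : 0 < q := by omega

include hK in
lemma pow_qq (x : K) : (x ^ q) ^ q = x := by
  rw [← pow_mul, ← sq, ← hK, FiniteField.pow_card]

include hfa hq2 in
lemma frob_neg (x : K) : (-x) ^ q = -(x ^ q) := by
  have h := hfa x (-x)
  simp only [add_neg_cancel, zero_pow (by omega : q ≠ 0)] at h
  linear_combination -h

include hfa hq2 in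
lemma frob_sub (x y : K) : (x - y) ^ q = x ^ q - y ^ q := by
  rw [sub_eq_add_neg, hfa, frob_neg hfa hq2, sub_eq_add_neg]

include hK in
lemma Tf_mem (hfa : ∀ x y : K, (x + y) ^ q = x ^ q + y ^ q) (b z : K) :
    (Tf q b z) ^ q = Tf q b z := by
  unfold Tf
  rw [hfa, mul_pow, mul_pow, pow_qq hK, pow_qq hK, add_comm]

include hfa in
lemma Tf_add_right (b z z' : K) : Tf q b (z + z') = Tf q b z + Tf q b z' := by
  unfold Tf; rw [hfa]; ring

include hfa hq2 in
lemma Tf_sub_right (b z z' : K) : Tf q b (z - z') = Tf q b z - Tf q b z' := by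
  unfold Tf; rw [frob_sub hfa hq2]; ring

include hfa in
lemma Tf_add_left (b b' z : K) : Tf q (b + b') z = Tf q b z + Tf q b' z := by
  unfold Tf; rw [hfa]; ring

include hfa hq2 in
lemma Tf_sub_left (b b' z : K) : Tf q (b - b') z = Tf q b z - Tf q b' z := by
  unfold Tf; rw [frob_sub hfa hq2]; ring

lemma Tf_smul_right {t : K} (ht : t ^ q = t) (b z : K) :
    Tf q b (t * z) = t * Tf q b z := by
  unfold Tf; rw [mul_pow, ht]; ring

lemma Tf_smul_left {t : K} (ht : t ^ q = t) (b z : K) :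
    Tf q (t * b) z = t * Tf q b z := by
  unfold Tf; rw [mul_pow, ht]; ring

-- closure facts for F
lemma F_mul {t s : K} (ht : t ^ q = t) (hs : s ^ q = s) : (t * s) ^ q = t * s := by
  rw [mul_pow, ht, hs]

lemma F_inv {t : K} (ht : t ^ q = t) : (t⁻¹) ^ q = t⁻¹ := by
  rw [inv_pow, ht]

include hK in
lemma frob_inj {x y : K} (h : x ^ q = y ^ q) : x = y := by
  have := congrArg (· ^ q) h
  simpa only [pow_qq hK] using this

end frob


section units

variable {q : ℕ} {u : Kˣ} (hu : ∀ x : Kˣ, x ∈ Subgroup.zpowers u)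
variable (hK : Fintype.card K = q ^ 2) (hq2 : 2 < q)

include hq2 in
lemma sq_sub_one : q ^ 2 - 1 = (q + 1) * (q - 1) := by
  obtain ⟨r, rfl⟩ : ∃ r, q = r + 1 := ⟨q - 1, by omega⟩
  have h1 : (r + 1) ^ 2 = r * r + 2 * r + 1 := by ring
  have h2 : (r + 1 + 1) * (r + 1 - 1) = r * r + 2 * r := by
    rw [Nat.add_sub_cancel]; ring
  omega

include hu hK in
lemma horder : orderOf u = q ^ 2 - 1 := by
  rw [orderOf_eq_card_of_forall_mem_zpowers hu, Nat.card_units,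
    Nat.card_eq_fintype_card, hK]

include hu in
lemma gen_tor {a b : ℕ} (ha : 0 < a) (h : orderOf u = a * b) (v : Kˣ) :
    v ^ a = 1 ↔ v ∈ Subgroup.zpowers (u ^ b) := by
  constructor
  · intro hv
    obtain ⟨m, rfl⟩ := Subgroup.mem_zpowers_iff.1 (hu v)
    have h1 : u ^ (m * (a : ℤ)) = 1 := by
      rw [zpow_mul, zpow_natCast]; exact hv
    have h2 : ((a * b : ℕ) : ℤ) ∣ m * a := by
      rw [← h]; exact orderOf_dvd_iff_zpow_eq_one.2 h1
    obtain ⟨c, hc⟩ := h2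
    have hb : m = b * c := by
      have ha' : (a : ℤ) ≠ 0 := by exact_mod_cast ha.ne'
      have : (a : ℤ) * m = a * (b * c) := by push_cast at hc ⊢; linarith [hc]
      exact mul_left_cancel₀ ha' this
    exact Subgroup.mem_zpowers_iff.2 ⟨c, by rw [← zpow_natCast, ← zpow_mul, hb]⟩
  · rintro ⟨k, rfl⟩
    rw [← zpow_natCast ((u ^ b) ^ k), ← zpow_mul, ← zpow_natCast u, ← zpow_mul]
    have he : (b : ℤ) * (k * (a : ℕ)) = ((a * b : ℕ) : ℤ) * k := by push_cast; ring
    rw [he, zpow_mul, zpow_natCast, ← h, pow_orderOf_eq_one, one_zpow]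

include hu hK hq2 in
lemma mem_F_star (v : Kˣ) : v ^ (q - 1) = 1 ↔ v ∈ Subgroup.zpowers (u ^ (q + 1)) :=
  gen_tor hu (by omega) (by rw [horder hu hK, sq_sub_one hq2, Nat.mul_comm]) v

include hu hK hq2 in
lemma mem_mu (v : Kˣ) : v ^ (q + 1) = 1 ↔ v ∈ Subgroup.zpowers (u ^ (q - 1)) :=
  gen_tor hu (by omega) (by rw [horder hu hK, sq_sub_one hq2]) v

include hK hq2 in
lemma F_iff_pow_sub_one {x : K} (hx : x ≠ 0) : x ^ q = x ↔ x ^ (q - 1) = 1 := by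
  have h1 : x ^ q = x ^ (q - 1) * x := by
    rw [← pow_succ]; congr 1; omega
  constructor
  · intro h
    exact mul_right_cancel₀ hx (by rw [← h1, h, one_mul])
  · intro h; rw [h1, h, one_mul]

end units
def Fset (K : Type*) [Field K] (q : ℕ) : Set K := {x | x ^ q = x}

section count

variable {q : ℕ} {u : Kˣ} (hu : ∀ x : Kˣ, x ∈ Subgroup.zpowers u)
variable (hK : Fintype.card K = q ^ 2) (hq2 : 2 < q)
variable (hfa : ∀ x y : K, (x + y) ^ q = x ^ q + y ^ q)

include hu hK hq2 in
lemma Fset_eq : Fset K q =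
    insert (0 : K) ((fun v : Kˣ => (v : K)) '' ((Subgroup.zpowers (u ^ (q + 1)) : Subgroup Kˣ) : Set Kˣ)) := by
  ext x
  simp only [Fset, Set.mem_setOf_eq, Set.mem_insert_iff, Set.mem_image]
  constructor
  · intro hx
    rcases eq_or_ne x 0 with h0 | h0
    · exact Or.inl h0
    · refine Or.inr ⟨Units.mk0 x h0, ?_, rfl⟩
      rw [SetLike.mem_coe, ← mem_F_star hu hK hq2]
      apply Units.ext
      rw [Units.val_pow_eq_pow_val]
      exact (F_iff_pow_sub_one hK hq2 h0).1 hx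
  · rintro (rfl | ⟨v, hv, rfl⟩)
    · exact zero_pow (by omega)
    · have h1 : (v : K) ^ (q - 1) = 1 := by
        have h2 := (mem_F_star hu hK hq2 v).2 hv
        rw [← Units.val_pow_eq_pow_val, h2, Units.val_one]
      exact (F_iff_pow_sub_one hK hq2 v.ne_zero).2 h1

include hu hK hq2 in
lemma Fset_ncard : (Fset K q).ncard = q := by
  rw [Fset_eq hu hK hq2]
  rw [Set.ncard_insert_of_notMem (by rintro ⟨v, -, hv⟩; exact v.ne_zero hv) (Set.toFinite _)]
  rw [Set.ncard_image_of_injective _ (fun a b h => Units.ext h)]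
  have h1 : ((Subgroup.zpowers (u ^ (q + 1)) : Subgroup Kˣ) : Set Kˣ).ncard
      = Nat.card (Subgroup.zpowers (u ^ (q + 1))) := (Nat.card_coe_set_eq _).symm
  rw [h1, Nat.card_zpowers, orderOf_pow u, horder hu hK, sq_sub_one hq2,
    Nat.gcd_eq_right ⟨q - 1, rfl⟩, Nat.mul_div_cancel_left _ (by omega : 0 < q + 1)]
  omega

include hu hK hq2 hfa in
lemma ker_exists {b : K} (hb : b ≠ 0) : ∃ e : K, e ≠ 0 ∧ Tf q b e = 0 := by
  have hneg : (-(b ^ (q - 1))) ≠ 0 := by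
    simp only [ne_eq, neg_eq_zero, pow_eq_zero_iff (by omega : q - 1 ≠ 0)]; exact hb
  set w : Kˣ := Units.mk0 (-(b ^ (q - 1))) hneg with hw
  have hminus1 : ((-1 : K)) ^ q = -1 := by
    have := frob_neg hfa hq2 (1 : K); simpa using this
  have hw1 : w ^ (q + 1) = 1 := by
    apply Units.ext
    rw [Units.val_pow_eq_pow_val]
    simp only [hw, Units.val_mk0, Units.val_one]
    have h2 : (-(b ^ (q - 1))) ^ (q + 1) = ((-1 : K)) ^ (q + 1) * b ^ ((q - 1) * (q + 1)) := by
      rw [neg_eq_neg_one_mul, mul_pow, ← pow_mul]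
    rw [h2, pow_succ, hminus1, neg_mul_neg, one_mul, one_mul]
    have h3 : (q - 1) * (q + 1) = q ^ 2 - 1 := by rw [sq_sub_one hq2, Nat.mul_comm]
    rw [h3, ← hK]
    have := FiniteField.pow_card_sub_one_eq_one b hb
    exact this
  obtain ⟨k, hk⟩ := Subgroup.mem_zpowers_iff.1 ((mem_mu hu hK hq2 w).1 hw1)
  refine ⟨((u ^ k : Kˣ) : K), Units.ne_zero _, ?_⟩
  have hcomm : (u ^ (q - 1)) ^ k = (u ^ k) ^ (q - 1) := by
    rw [← zpow_natCast u, ← zpow_mul, ← zpow_natCast (u ^ k), ← zpow_mul, mul_comm]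
  have he : ((u ^ k : Kˣ) : K) ^ (q - 1) = -(b ^ (q - 1)) := by
    rw [← Units.val_pow_eq_pow_val, ← hcomm, hk, hw, Units.val_mk0]
  set e : K := ((u ^ k : Kˣ) : K)
  have heq : e ^ q = e ^ (q - 1) * e := by rw [← pow_succ]; congr 1; omega
  have hbq : b ^ q = b ^ (q - 1) * b := by rw [← pow_succ]; congr 1; omega
  unfold Tf
  rw [heq, he, hbq]
  ring

include hu hK hq2 hfa in
lemma ker_desc {b : K} (hb : b ≠ 0) :
    ∃ e : K, e ≠ 0 ∧ ∀ z : K, (Tf q b z = 0 ↔ ∃ t : K, t ^ q = t ∧ z = t * e) := by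
  obtain ⟨e, he0, he⟩ := ker_exists hu hK hq2 hfa hb
  have hepow : e ^ (q - 1) = -(b ^ (q - 1)) := by
    have heq : e ^ q = e ^ (q - 1) * e := by rw [← pow_succ]; congr 1; omega
    have hbq : b ^ q = b ^ (q - 1) * b := by rw [← pow_succ]; congr 1; omega
    have h1 : e * (b * e ^ (q - 1) + b ^ (q - 1) * b) = 0 := by
      rw [← he]; unfold Tf; rw [heq, hbq]; ring
    rcases mul_eq_zero.1 h1 with h | h
    · exact absurd h he0
    · have h2 := eq_neg_of_add_eq_zero_left h
      exact mul_left_cancel₀ hb (by rw [h2]; ring)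
  refine ⟨e, he0, fun z => ?_⟩
  constructor
  · intro hz
    rcases eq_or_ne z 0 with rfl | hz0
    · exact ⟨0, by rw [zero_pow (by omega : q ≠ 0)], by ring⟩
    · have hzpow : z ^ (q - 1) = -(b ^ (q - 1)) := by
        have heq : z ^ q = z ^ (q - 1) * z := by rw [← pow_succ]; congr 1; omega
        have hbq : b ^ q = b ^ (q - 1) * b := by rw [← pow_succ]; congr 1; omega
        have h1 : z * (b * z ^ (q - 1) + b ^ (q - 1) * b) = 0 := by
          rw [← hz]; unfold Tf; rw [heq, hbq]; ring
        rcases mul_eq_zero.1 h1 with h | h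
        · exact absurd h hz0
        · have h2 := eq_neg_of_add_eq_zero_left h
          exact mul_left_cancel₀ hb (by rw [h2]; ring)
      refine ⟨z * e⁻¹, ?_, by field_simp⟩
      have ht0 : z * e⁻¹ ≠ 0 := by
        apply mul_ne_zero hz0 (inv_ne_zero he0)
      rw [F_iff_pow_sub_one hK hq2 ht0, mul_pow, inv_pow, hzpow, hepow]
      exact mul_inv_cancel₀ (by
        simp only [ne_eq, neg_eq_zero, pow_eq_zero_iff (by omega : q - 1 ≠ 0)]
        exact hb)
  · rintro ⟨t, ht, rfl⟩
    rw [Tf_smul_right ht, he, mul_zero]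

end count

section count2

variable {q : ℕ} {u : Kˣ} (hu : ∀ x : Kˣ, x ∈ Subgroup.zpowers u)
variable (hK : Fintype.card K = q ^ 2) (hq2 : 2 < q)
variable (hfa : ∀ x y : K, (x + y) ^ q = x ^ q + y ^ q)

include hu hK hq2 hfa in
lemma ker_ncard {b : K} (hb : b ≠ 0) : {z : K | Tf q b z = 0}.ncard = q := by
  obtain ⟨e, he0, he⟩ := ker_desc hu hK hq2 hfa hb
  have h1 : {z : K | Tf q b z = 0} = (fun t => t * e) '' Fset K q := by
    ext z
    simp only [Set.mem_setOf_eq, Set.mem_image, Fset]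
    rw [he z]
    constructor
    · rintro ⟨t, ht, rfl⟩; exact ⟨t, ht, rfl⟩
    · rintro ⟨t, ht, rfl⟩; exact ⟨t, ht, rfl⟩
  rw [h1, Set.ncard_image_of_injective _ (mul_left_injective₀ he0), Fset_ncard hu hK hq2]

include hu hK hq2 hfa in
lemma Tf_fibers {b : K} (hb : b ≠ 0) {c : K} (hc : c ^ q = c) :
    (∃ z : K, Tf q b z = c) ∧ {z : K | Tf q b z = c}.ncard = q := by
  set ψ : K →+ K := AddMonoidHom.mk' (fun z => Tf q b z) (fun z z' => Tf_add_right hfa b z z')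
    with hψ
  have hkerset : (ψ.ker : Set K) = {z : K | Tf q b z = 0} := by
    ext z; simp only [SetLike.mem_coe, AddMonoidHom.mem_ker, Set.mem_setOf_eq, hψ,
      AddMonoidHom.mk'_apply]
  have hkercard : Nat.card ψ.ker = q := by
    have h0 : Nat.card (ψ.ker : Set K) = ((ψ.ker : Set K)).ncard := Nat.card_coe_set_eq _
    rw [show (Nat.card ψ.ker) = Nat.card (ψ.ker : Set K) from rfl, h0, hkerset]
    exact ker_ncard hu hK hq2 hfa hb
  have hcardK : Nat.card K = q ^ 2 := by rw [Nat.card_eq_fintype_card, hK]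
  have hquot := AddSubgroup.card_eq_card_quotient_mul_card_addSubgroup ψ.ker
  have hrange : Nat.card ψ.range = Nat.card (K ⧸ ψ.ker) :=
    Nat.card_congr (QuotientAddGroup.quotientKerEquivRange ψ).toEquiv |>.symm
  have hrangecard : Nat.card ψ.range = q := by
    have h2 : q ^ 2 = Nat.card (K ⧸ ψ.ker) * q := by
      rw [← hcardK, hquot, hkercard]
    have h3 : q * q = Nat.card (K ⧸ ψ.ker) * q := by rw [← h2]; ring
    rw [hrange, ← Nat.eq_of_mul_eq_mul_right (by omega : 0 < q) h3]
  have hrangeset : (ψ.range : Set K) = Fset K q := by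
    apply Set.eq_of_subset_of_ncard_le
    · rintro x ⟨z, rfl⟩
      exact Tf_mem hK hfa b z
    · rw [Fset_ncard hu hK hq2, ← Nat.card_coe_set_eq]
      simp only [SetLike.coe_sort_coe]
      rw [hrangecard]
    · exact Set.toFinite _
  have hex : ∃ z : K, Tf q b z = c := by
    have : c ∈ (ψ.range : Set K) := by rw [hrangeset]; exact hc
    obtain ⟨z, hz⟩ := this
    exact ⟨z, hz⟩
  obtain ⟨z₀, hz₀⟩ := hex
  refine ⟨⟨z₀, hz₀⟩, ?_⟩
  have hfib : {z : K | Tf q b z = c} = (fun k => z₀ + k) '' {z : K | Tf q b z = 0} := by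
    ext z
    simp only [Set.mem_setOf_eq, Set.mem_image]
    constructor
    · intro hz
      refine ⟨z - z₀, ?_, by ring⟩
      rw [Tf_sub_right hfa hq2, hz, hz₀, sub_self]
    · rintro ⟨k, hk, rfl⟩
      rw [Tf_add_right hfa, hz₀, hk, add_zero]
  rw [hfib, Set.ncard_image_of_injective _ (add_right_injective z₀)]
  exact ker_ncard hu hK hq2 hfa hb

end count2

section orbits

variable {q : ℕ} {u : Kˣ} (hu : ∀ x : Kˣ, x ∈ Subgroup.zpowers u)
variable (hK : Fintype.card K = q ^ 2) (hq2 : 2 < q)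

lemma gPerm_apply (v : Kˣ) (s : K × K) :
    gPerm q v s = (((v : K)) * s.1, ((v : K)) ^ (q + 1) * s.2) := by
  simp only [gPerm, Equiv.prodCongr_apply, Prod.map, MulAction.toPerm_apply, Units.smul_def,
    Units.val_pow_eq_pow_val, smul_eq_mul]

lemma gPerm_mul (v w : Kˣ) : gPerm q (v * w) = gPerm q v * gPerm q w := by
  apply Equiv.ext
  intro s
  rw [Equiv.Perm.mul_apply, gPerm_apply, gPerm_apply, gPerm_apply]
  simp only [Units.val_mul, Prod.mk.injEq]
  exact ⟨by ring, by ring⟩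

/-- `gPerm q` as a monoid hom. -/
noncomputable def gHom (q : ℕ) : Kˣ →* Equiv.Perm (K × K) :=
  MonoidHom.mk' (fun v => gPerm q v) gPerm_mul

lemma gPerm_zpow (k : ℤ) : (gPerm q u) ^ k = gPerm q (u ^ k) :=
  (map_zpow (gHom (K := K) q) u k).symm

lemma mem_orbit (s t : K × K) :
    t ∈ MulAction.orbit (gGroup q u) s ↔
      ∃ k : ℤ, t = (((u ^ k : Kˣ) : K) * s.1, ((u ^ k : Kˣ) : K) ^ (q + 1) * s.2) := by
  constructor
  · rintro ⟨⟨σ, hσ⟩, rfl⟩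
    obtain ⟨k, rfl⟩ := Subgroup.mem_zpowers_iff.1 hσ
    refine ⟨k, ?_⟩
    show ((gPerm q u) ^ k) s = _
    rw [gPerm_zpow, gPerm_apply]
  · rintro ⟨k, rfl⟩
    refine ⟨⟨(gPerm q u) ^ k, Subgroup.zpow_mem _ (Subgroup.mem_zpowers _) k⟩, ?_⟩
    show ((gPerm q u) ^ k) s = _
    rw [gPerm_zpow, gPerm_apply]

/-- The orbit of `(1, z)`: an affine point. -/
def Apt (q : ℕ) (u : Kˣ) (z : K) : Set (K × K) := MulAction.orbit (gGroup q u) (1, z)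

/-- The orbit of `(0, y)`: a point at infinity. -/
def Bpt (q : ℕ) (u : Kˣ) (y : K) : Set (K × K) := MulAction.orbit (gGroup q u) (0, y)

lemma mem_Apt (z : K) (t : K × K) :
    t ∈ Apt q u z ↔ ∃ k : ℤ, t = (((u ^ k : Kˣ) : K), ((u ^ k : Kˣ) : K) ^ (q + 1) * z) := by
  rw [Apt, mem_orbit]
  simp only [mul_one]

lemma base_mem_Apt (z : K) : ((1 : K), z) ∈ Apt q u z :=
  MulAction.mem_orbit_self _

lemma Apt_elts {z : K} {t : K × K} (ht : t ∈ Apt q u z) :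
    t.1 ≠ 0 ∧ t.2 = t.1 ^ (q + 1) * z := by
  obtain ⟨k, rfl⟩ := (mem_Apt z t).1 ht
  exact ⟨Units.ne_zero _, rfl⟩

lemma Apt_inj {z z' : K} (h : Apt q u z = Apt q u z') : z = z' := by
  have h1 : ((1 : K), z) ∈ Apt q u z' := h ▸ base_mem_Apt z
  obtain ⟨h2, h3⟩ := Apt_elts h1
  simpa using h3

lemma mem_Bpt_raw (y : K) (t : K × K) :
    t ∈ Bpt q u y ↔ ∃ k : ℤ, t = ((0 : K), ((u ^ k : Kˣ) : K) ^ (q + 1) * y) := by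
  rw [Bpt, mem_orbit]
  simp only [mul_zero]

lemma Bpt_fst {y : K} {t : K × K} (ht : t ∈ Bpt q u y) : t.1 = 0 := by
  obtain ⟨k, rfl⟩ := (mem_Bpt_raw y t).1 ht
  rfl

lemma Apt_ne_Bpt (z y : K) : Apt q u z ≠ Bpt q u y := by
  intro h
  have h1 : ((1 : K), z) ∈ Bpt q u y := h ▸ base_mem_Apt z
  have := Bpt_fst h1
  simp at this

include hu hK hq2 in
lemma mem_Bpt {y : K} (hy : y ≠ 0) (t : K × K) :
    t ∈ Bpt q u y ↔ t.1 = 0 ∧ ∃ v : K, v ≠ 0 ∧ v ^ q = v ∧ t.2 = v * y := by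
  have hcomm : ∀ k : ℤ, (u ^ k) ^ (q + 1) = (u ^ (q + 1)) ^ k := by
    intro k
    rw [← zpow_natCast (u ^ k), ← zpow_mul, ← zpow_natCast u, ← zpow_mul, mul_comm]
  rw [mem_Bpt_raw]
  constructor
  · rintro ⟨k, rfl⟩
    refine ⟨rfl, ((u ^ k : Kˣ) : K) ^ (q + 1), pow_ne_zero _ (Units.ne_zero _), ?_, rfl⟩
    have hmem : (u ^ k) ^ (q + 1) ∈ Subgroup.zpowers (u ^ (q + 1)) := by
      rw [hcomm k]; exact Subgroup.zpow_mem _ (Subgroup.mem_zpowers _) k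
    have h1 := (mem_F_star hu hK hq2 ((u ^ k) ^ (q + 1))).2 hmem
    have h2 : (((u ^ k : Kˣ) : K) ^ (q + 1)) ^ (q - 1) = 1 := by
      rw [← Units.val_pow_eq_pow_val, ← Units.val_pow_eq_pow_val, h1, Units.val_one]
    rw [F_iff_pow_sub_one hK hq2 (pow_ne_zero _ (Units.ne_zero _))]
    rw [← Units.val_pow_eq_pow_val] at h2 ⊢
    exact h2
  · rintro ⟨h0, v, hv0, hvq, hv⟩
    have hmem : Units.mk0 v hv0 ∈ Subgroup.zpowers (u ^ (q + 1)) := by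
      rw [← mem_F_star hu hK hq2]
      apply Units.ext
      rw [Units.val_pow_eq_pow_val, Units.val_mk0, Units.val_one]
      exact (F_iff_pow_sub_one hK hq2 hv0).1 hvq
    obtain ⟨k, hk⟩ := Subgroup.mem_zpowers_iff.1 hmem
    refine ⟨k, ?_⟩
    have h3 : ((u ^ k : Kˣ) : K) ^ (q + 1) = v := by
      rw [← Units.val_pow_eq_pow_val, hcomm k, hk, Units.val_mk0]
    rw [h3, ← hv, ← h0]

include hu hK hq2 in
lemma Bpt_smul {y v : K} (hy : y ≠ 0) (hv0 : v ≠ 0) (hvq : v ^ q = v) :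
    Bpt q u (v * y) = Bpt q u y := by
  apply MulAction.orbit_eq_iff.2
  show ((0 : K), v * y) ∈ Bpt q u y
  rw [mem_Bpt hu hK hq2 hy]
  exact ⟨rfl, v, hv0, hvq, rfl⟩

include hu hK hq2 in
lemma Bpt_eq_iff {y y' : K} (hy : y ≠ 0) (h : Bpt q u y = Bpt q u y') :
    ∃ v : K, v ≠ 0 ∧ v ^ q = v ∧ y' = v * y := by
  have h1 : ((0 : K), y') ∈ Bpt q u y := by
    rw [h]; exact MulAction.mem_orbit_self _
  obtain ⟨-, v, hv0, hvq, hv⟩ := (mem_Bpt hu hK hq2 hy _).1 h1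
  exact ⟨v, hv0, hvq, hv⟩

include hu in
lemma orbit_of_fst_ne {x y : K} (hx : x ≠ 0) :
    MulAction.orbit (gGroup q u) (x, y) = Apt q u ((x⁻¹) ^ (q + 1) * y) := by
  apply MulAction.orbit_eq_iff.2
  obtain ⟨m, hm⟩ := Subgroup.mem_zpowers_iff.1 (hu (Units.mk0 x hx))
  show (x, y) ∈ Apt q u ((x⁻¹) ^ (q + 1) * y)
  rw [mem_Apt]
  refine ⟨m, ?_⟩
  have h1 : ((u ^ m : Kˣ) : K) = x := by rw [hm, Units.val_mk0]
  rw [h1]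
  have h2 : x ^ (q + 1) * ((x⁻¹) ^ (q + 1) * y) = y := by
    field_simp
    rw [one_div, ← mul_pow, mul_inv_cancel₀ hx, one_pow, one_mul]
  rw [h2]

/-- The set of points. -/
def OmegaSet (K : Type*) [Field K] (q : ℕ) (u : Kˣ) : Set (Set (K × K)) :=
  {O : Set (K × K) | ∃ s : K × K, s ≠ (0, 0) ∧ O = MulAction.orbit (gGroup q u) s}

include hu in
lemma mem_OmegaSet (O : Set (K × K)) :
    O ∈ OmegaSet K q u ↔ (∃ z : K, O = Apt q u z) ∨ (∃ y : K, y ≠ 0 ∧ O = Bpt q u y) := by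
  constructor
  · rintro ⟨⟨x, y⟩, hs, rfl⟩
    rcases eq_or_ne x 0 with rfl | hx
    · refine Or.inr ⟨y, ?_, rfl⟩
      intro hy
      exact hs (by rw [hy])
    · exact Or.inl ⟨(x⁻¹) ^ (q + 1) * y, orbit_of_fst_ne hu hx⟩
  · rintro (⟨z, rfl⟩ | ⟨y, hy, rfl⟩)
    · exact ⟨(1, z), by simp, rfl⟩
    · exact ⟨(0, y), by simp [hy], rfl⟩

include hu in
lemma Apt_mem_OmegaSet (z : K) : Apt q u z ∈ OmegaSet K q u :=
  (mem_OmegaSet hu _).2 (Or.inl ⟨z, rfl⟩)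

include hu in
lemma Bpt_mem_OmegaSet {y : K} (hy : y ≠ 0) : Bpt q u y ∈ OmegaSet K q u :=
  (mem_OmegaSet hu _).2 (Or.inr ⟨y, hy, rfl⟩)

end orbits

section lines

variable {q : ℕ} {u : Kˣ} (hu : ∀ x : Kˣ, x ∈ Subgroup.zpowers u)
variable (hK : Fintype.card K = q ^ 2) (hq2 : 2 < q)
variable (hfa : ∀ x y : K, (x + y) ^ q = x ^ q + y ^ q)

/-- The line at infinity. -/
def lineInf (K : Type*) [Field K] (q : ℕ) (u : Kˣ) : Set (Set (K × K)) :=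
  {O ∈ OmegaSet K q u | O ⊆ {s : K × K | s.1 = 0 ∧ s.2 ≠ 0}}

/-- The Hermitian-curve lines. -/
def lineS (K : Type*) [Field K] (q : ℕ) (u : Kˣ) (b : K) : Set (Set (K × K)) :=
  {O ∈ OmegaSet K q u | O ⊆ {s : K × K |
    s ≠ (0, 0) ∧ s.1 ^ (q + 1) = b * s.2 ^ q + b ^ q * s.2}}

/-- The cone lines. -/
def lineC (K : Type*) [Field K] (q : ℕ) (u : Kˣ) (c : K) : Set (Set (K × K)) :=
  {O ∈ OmegaSet K q u | O ⊆ {s : K × K |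
    s ≠ (0, 0) ∧ c ^ q * s.2 ^ q + c * s.2 = 0}}

include hK hq2 in
lemma norm_F (x : K) : (x ^ (q + 1)) ^ q = x ^ (q + 1) := by
  rw [← pow_mul]
  have h1 : (q + 1) * q = q * q + q := by ring
  rw [h1, pow_add, pow_mul, pow_qq hK, pow_succ]
  ring

lemma pair_ne_zero_of_snd {t : K × K} (h : t.2 ≠ 0) : t ≠ (0, 0) := by
  intro heq; rw [heq] at h; exact h rfl

lemma pair_ne_zero_of_fst {t : K × K} (h : t.1 ≠ 0) : t ≠ (0, 0) := by
  intro heq; rw [heq] at h; exact h rfl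

include hu in
lemma Apt_not_mem_lineInf (z : K) : Apt q u z ∉ lineInf K q u := by
  rintro ⟨-, hsub⟩
  have := (hsub (base_mem_Apt z)).1
  simp at this

include hu hK hq2 in
lemma Bpt_mem_lineInf {y : K} (hy : y ≠ 0) : Bpt q u y ∈ lineInf K q u := by
  refine ⟨Bpt_mem_OmegaSet hu hy, ?_⟩
  intro t ht
  obtain ⟨h0, v, hv0, -, hv⟩ := (mem_Bpt hu hK hq2 hy t).1 ht
  exact ⟨h0, by rw [hv]; exact mul_ne_zero hv0 hy⟩

include hu hK hq2 in
lemma Apt_mem_lineS (z b : K) : Apt q u z ∈ lineS K q u b ↔ Tf q b z = 1 := by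
  constructor
  · rintro ⟨-, hsub⟩
    have h1 := (hsub (base_mem_Apt z)).2
    simp only [one_pow] at h1
    exact (by rw [Tf]; exact h1.symm)
  · intro hT
    refine ⟨Apt_mem_OmegaSet hu z, ?_⟩
    intro t ht
    obtain ⟨k, rfl⟩ := (mem_Apt z t).1 ht
    set x : K := ((u ^ k : Kˣ) : K) with hx
    refine ⟨pair_ne_zero_of_fst (Units.ne_zero _), ?_⟩
    show x ^ (q + 1) = b * (x ^ (q + 1) * z) ^ q + b ^ q * (x ^ (q + 1) * z)
    rw [mul_pow, norm_F hK hq2]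
    have : b * (x ^ (q + 1) * z ^ q) + b ^ q * (x ^ (q + 1) * z)
        = x ^ (q + 1) * Tf q b z := by rw [Tf]; ring
    rw [this, hT, mul_one]

include hu hK hq2 in
lemma Bpt_mem_lineS {y : K} (hy : y ≠ 0) (b : K) :
    Bpt q u y ∈ lineS K q u b ↔ Tf q b y = 0 := by
  constructor
  · rintro ⟨-, hsub⟩
    have h1 := (hsub (MulAction.mem_orbit_self _)).2
    simp only [zero_pow (by omega : q + 1 ≠ 0)] at h1
    exact (by rw [Tf]; exact h1.symm)
  · intro hT
    refine ⟨Bpt_mem_OmegaSet hu hy, ?_⟩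
    intro t ht
    obtain ⟨h0, v, hv0, hvq, hv⟩ := (mem_Bpt hu hK hq2 hy t).1 ht
    refine ⟨pair_ne_zero_of_snd (by rw [hv]; exact mul_ne_zero hv0 hy), ?_⟩
    rw [h0, hv, zero_pow (by omega : q + 1 ≠ 0), mul_pow, hvq]
    have : b * (v * y ^ q) + b ^ q * (v * y) = v * Tf q b y := by rw [Tf]; ring
    rw [this, hT, mul_zero]

include hu hK hq2 in
lemma Apt_mem_lineC (z c : K) : Apt q u z ∈ lineC K q u c ↔ Tf q (c ^ q) z = 0 := by
  have hTf : ∀ w : K, Tf q (c ^ q) w = c ^ q * w ^ q + c * w := by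
    intro w; rw [Tf, pow_qq hK]
  constructor
  · rintro ⟨-, hsub⟩
    have h1 := (hsub (base_mem_Apt z)).2
    rw [hTf]; exact h1
  · intro hT
    refine ⟨Apt_mem_OmegaSet hu z, ?_⟩
    intro t ht
    obtain ⟨k, rfl⟩ := (mem_Apt z t).1 ht
    set x : K := ((u ^ k : Kˣ) : K) with hx
    refine ⟨pair_ne_zero_of_fst (Units.ne_zero _), ?_⟩
    show c ^ q * (x ^ (q + 1) * z) ^ q + c * (x ^ (q + 1) * z) = 0
    rw [mul_pow, norm_F hK hq2]
    have : c ^ q * (x ^ (q + 1) * z ^ q) + c * (x ^ (q + 1) * z)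
        = x ^ (q + 1) * (c ^ q * z ^ q + c * z) := by ring
    rw [this, ← hTf, hT, mul_zero]

include hu hK hq2 in
lemma Bpt_mem_lineC {y : K} (hy : y ≠ 0) (c : K) :
    Bpt q u y ∈ lineC K q u c ↔ Tf q (c ^ q) y = 0 := by
  have hTf : ∀ w : K, Tf q (c ^ q) w = c ^ q * w ^ q + c * w := by
    intro w; rw [Tf, pow_qq hK]
  constructor
  · rintro ⟨-, hsub⟩
    have h1 := (hsub (MulAction.mem_orbit_self _)).2
    rw [hTf]; exact h1
  · intro hT
    refine ⟨Bpt_mem_OmegaSet hu hy, ?_⟩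
    intro t ht
    obtain ⟨h0, v, hv0, hvq, hv⟩ := (mem_Bpt hu hK hq2 hy t).1 ht
    refine ⟨pair_ne_zero_of_snd (by rw [hv]; exact mul_ne_zero hv0 hy), ?_⟩
    rw [hv, mul_pow, hvq]
    have : c ^ q * (v * y ^ q) + c * (v * y) = v * (c ^ q * y ^ q + c * y) := by ring
    rw [this, ← hTf, hT, mul_zero]

end lines

section distinct

variable {q : ℕ} {u : Kˣ} (hu : ∀ x : Kˣ, x ∈ Subgroup.zpowers u)
variable (hK : Fintype.card K = q ^ 2) (hq2 : 2 < q)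
variable (hfa : ∀ x y : K, (x + y) ^ q = x ^ q + y ^ q)

include hu hK hq2 hfa in
lemma perp {y : K} (hy : y ≠ 0) :
    ∃ d : K, d ≠ 0 ∧ ∀ b : K, (Tf q b y = 0 ↔ ∃ t : K, t ^ q = t ∧ b = t * d) := by
  obtain ⟨e, he0, he⟩ := ker_desc hu hK hq2 hfa hy
  exact ⟨e, he0, fun b => by rw [Tf_symm]; exact he b⟩

include hu hK hq2 hfa in
lemma dep_of_common_perp {b b' y : K} (hb : b ≠ 0) (hb' : b' ≠ 0) (hy : y ≠ 0)
    (h1 : Tf q b y = 0) (h2 : Tf q b' y = 0) :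
    ∃ t : K, t ≠ 0 ∧ t ^ q = t ∧ b' = t * b := by
  obtain ⟨d, hd0, hd⟩ := perp hu hK hq2 hfa hy
  obtain ⟨t, htq, rfl⟩ := (hd b).1 h1
  obtain ⟨t', htq', rfl⟩ := (hd b').1 h2
  have ht0 : t ≠ 0 := fun h => hb (by rw [h, zero_mul])
  have ht0' : t' ≠ 0 := fun h => hb' (by rw [h, zero_mul])
  refine ⟨t' * t⁻¹, mul_ne_zero ht0' (inv_ne_zero ht0), F_mul htq' (F_inv htq), ?_⟩
  field_simp

include hu hK hq2 hfa in
lemma lineS_inj {b b' : K} (hb : b ≠ 0) (hb' : b' ≠ 0)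
    (h : lineS K q u b = lineS K q u b') : b = b' := by
  by_contra hne
  have hδ : b - b' ≠ 0 := sub_ne_zero.2 hne
  have hsub : {z : K | Tf q b z = 1} ⊆ {z : K | Tf q (b - b') z = 0} := by
    intro z hz
    have h1 : Apt q u z ∈ lineS K q u b := (Apt_mem_lineS hu hK hq2 z b).2 hz
    have h2 : Tf q b' z = 1 := (Apt_mem_lineS hu hK hq2 z b').1 (h ▸ h1)
    show Tf q (b - b') z = 0
    rw [Tf_sub_left hfa hq2, hz, h2, sub_self]
  have hc1 : {z : K | Tf q b z = 1}.ncard = q :=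
    (Tf_fibers hu hK hq2 hfa hb (by rw [one_pow])).2
  have hc2 : {z : K | Tf q (b - b') z = 0}.ncard = q := ker_ncard hu hK hq2 hfa hδ
  have heq := Set.eq_of_subset_of_ncard_le hsub (by rw [hc1, hc2]) (Set.toFinite _)
  have h0 : (0 : K) ∈ {z : K | Tf q (b - b') z = 0} := by
    show Tf q (b - b') 0 = 0
    exact Tf_zero_right q (by omega) _
  rw [← heq] at h0
  have : (0 : K) = 1 := by
    have := h0
    simp only [Set.mem_setOf_eq, Tf_zero_right q (by omega : 0 < q)] at this
    exact this
  exact zero_ne_one this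

include hu hK hq2 in
lemma lineC_smul {c t : K} (ht : t ≠ 0) (htq : t ^ q = t) :
    lineC K q u (t * c) = lineC K q u c := by
  have hset : {s : K × K | s ≠ (0, 0) ∧ (t * c) ^ q * s.2 ^ q + (t * c) * s.2 = 0}
      = {s : K × K | s ≠ (0, 0) ∧ c ^ q * s.2 ^ q + c * s.2 = 0} := by
    ext s
    simp only [Set.mem_setOf_eq, and_congr_right_iff]
    intro hs
    rw [mul_pow, htq]
    constructor
    · intro h
      have h2 : t * (c ^ q * s.2 ^ q + c * s.2) = 0 := by rw [← h]; ring
      rcases mul_eq_zero.1 h2 with h3 | h3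
      · exact absurd h3 ht
      · exact h3
    · intro h
      have : t * c ^ q * s.2 ^ q + t * c * s.2 = t * (c ^ q * s.2 ^ q + c * s.2) := by ring
      rw [this, h, mul_zero]
  unfold lineC
  rw [hset]

include hu hK hq2 hfa in
lemma lineC_eq_iff {c c' : K} (hc : c ≠ 0) (hc' : c' ≠ 0)
    (h : lineC K q u c = lineC K q u c') :
    ∃ t : K, t ≠ 0 ∧ t ^ q = t ∧ c' = t * c := by
  have hcq : c ^ q ≠ 0 := pow_ne_zero _ hc
  have hcq' : c' ^ q ≠ 0 := pow_ne_zero _ hc'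
  obtain ⟨e, he0, he⟩ := ker_desc hu hK hq2 hfa hcq
  have h1 : Tf q (c ^ q) e = 0 := (he e).2 ⟨1, one_pow q, (one_mul e).symm⟩
  have h2 : Bpt q u e ∈ lineC K q u c := (Bpt_mem_lineC hu hK hq2 he0 c).2 h1
  have h3 : Tf q (c' ^ q) e = 0 := (Bpt_mem_lineC hu hK hq2 he0 c').1 (h ▸ h2)
  obtain ⟨t, ht0, htq, hteq⟩ := dep_of_common_perp hu hK hq2 hfa hcq hcq' he0 h1 h3
  refine ⟨t, ht0, htq, ?_⟩
  apply frob_inj hK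
  rw [hteq, mul_pow, htq]

include hu hK hq2 in
lemma Apt_zero_mem_lineC (c : K) : Apt q u 0 ∈ lineC K q u c :=
  (Apt_mem_lineC hu hK hq2 0 c).2 (Tf_zero_right q (by omega) _)

include hu hK hq2 in
lemma Apt_zero_not_mem_lineS (b : K) : Apt q u 0 ∉ lineS K q u b := by
  intro h
  have := (Apt_mem_lineS hu hK hq2 0 b).1 h
  rw [Tf_zero_right q (by omega)] at this
  exact zero_ne_one this

include hu hK hq2 in
lemma lineC_ne_lineInf (c : K) : lineC K q u c ≠ lineInf K q u := by
  intro h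
  exact Apt_not_mem_lineInf hu 0 (h ▸ Apt_zero_mem_lineC hu hK hq2 c)

include hu hK hq2 in
lemma lineS_ne_lineC (b c : K) : lineS K q u b ≠ lineC K q u c := by
  intro h
  exact Apt_zero_not_mem_lineS hu hK hq2 b (h ▸ Apt_zero_mem_lineC hu hK hq2 c)

include hu hK hq2 hfa in
lemma lineS_ne_lineInf {b : K} (hb : b ≠ 0) : lineS K q u b ≠ lineInf K q u := by
  obtain ⟨⟨z, hz⟩, -⟩ := Tf_fibers hu hK hq2 hfa hb (by rw [one_pow] : (1:K) ^ q = 1)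
  intro h
  exact Apt_not_mem_lineInf hu z (h ▸ (Apt_mem_lineS hu hK hq2 z b).2 hz)

end distinct

section counting

variable {q : ℕ} {u : Kˣ} (hu : ∀ x : Kˣ, x ∈ Subgroup.zpowers u)
variable (hK : Fintype.card K = q ^ 2) (hq2 : 2 < q)
variable (hfa : ∀ x y : K, (x + y) ^ q = x ^ q + y ^ q)

include hu hK hq2 in
lemma unitF (w : Kˣ) : w ∈ Subgroup.zpowers (u ^ (q + 1)) ↔ ((w : K)) ^ q = (w : K) := by
  rw [← mem_F_star hu hK hq2, F_iff_pow_sub_one hK hq2 w.ne_zero]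
  constructor
  · intro h
    rw [← Units.val_pow_eq_pow_val, h, Units.val_one]
  · intro h
    apply Units.ext
    rw [Units.val_pow_eq_pow_val, h, Units.val_one]

include hu hK hq2 in
lemma quot_card : Nat.card (Kˣ ⧸ Subgroup.zpowers (u ^ (q + 1))) = q + 1 := by
  have h1 := Subgroup.card_eq_card_quotient_mul_card_subgroup (Subgroup.zpowers (u ^ (q + 1)))
  have h2 : Nat.card Kˣ = q ^ 2 - 1 := by rw [Nat.card_units, Nat.card_eq_fintype_card, hK]
  have h3 : Nat.card (Subgroup.zpowers (u ^ (q + 1))) = q - 1 := by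
    rw [Nat.card_zpowers, orderOf_pow u, horder hu hK, sq_sub_one hq2,
      Nat.gcd_eq_right ⟨q - 1, rfl⟩, Nat.mul_div_cancel_left _ (by omega : 0 < q + 1)]
  rw [h2, h3, sq_sub_one hq2] at h1
  exact (Nat.eq_of_mul_eq_mul_right (by omega : 0 < q - 1) h1.symm)

include hu hK hq2 in
lemma coset_range_ncard {β : Type*} (g : Kˣ → β)
    (hwell : ∀ a b : Kˣ, (∃ v : K, v ≠ 0 ∧ v ^ q = v ∧ (b : K) = v * (a : K)) → g a = g b)
    (hinj : ∀ a b : Kˣ, g a = g b → ∃ v : K, v ≠ 0 ∧ v ^ q = v ∧ (b : K) = v * (a : K)) :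
    (Set.range g).ncard = q + 1 := by
  set H := Subgroup.zpowers (u ^ (q + 1)) with hH
  have hrel : ∀ a b : Kˣ, @Setoid.r _ (QuotientGroup.leftRel H) a b → g a = g b := by
    intro a b hab
    have h1 : a⁻¹ * b ∈ H := QuotientGroup.leftRel_apply.1 hab
    apply hwell
    refine ⟨((a⁻¹ * b : Kˣ) : K), Units.ne_zero _, (unitF hu hK hq2 _).1 h1, ?_⟩
    push_cast
    field_simp
  set f : Kˣ ⧸ H → β := Quotient.lift g hrel with hf
  have hfi : Function.Injective f := by
    intro x y
    induction x using Quotient.ind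
    induction y using Quotient.ind
    rename_i a b
    intro hab
    have h1 : g a = g b := hab
    obtain ⟨v, hv0, hvq, hv⟩ := hinj a b h1
    apply Quotient.sound
    show @Setoid.r _ (QuotientGroup.leftRel H) a b
    rw [QuotientGroup.leftRel_apply]
    have h2 : a⁻¹ * b = Units.mk0 v hv0 := by
      apply Units.ext
      push_cast
      rw [hv]
      field_simp
      rw [Units.val_mk0]
    rw [h2, hH, unitF hu hK hq2]
    exact hvq
  have hrange : Set.range g = Set.range f := by
    ext x
    constructor
    · rintro ⟨a, rfl⟩; exact ⟨⟦a⟧, rfl⟩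
    · rintro ⟨a, rfl⟩
      induction a using Quotient.ind
      rename_i a
      exact ⟨a, rfl⟩
  rw [hrange, ← Set.image_univ, Set.ncard_image_of_injective _ hfi, Set.ncard_univ,
    quot_card hu hK hq2]

/-- Points at infinity. -/
def Bset (K : Type*) [Field K] [Fintype K] (q : ℕ) (u : Kˣ) : Set (Set (K × K)) :=
  {O : Set (K × K) | ∃ y : K, y ≠ 0 ∧ O = Bpt q u y}

/-- Affine points. -/
def Aset (K : Type*) [Field K] [Fintype K] (q : ℕ) (u : Kˣ) : Set (Set (K × K)) :=
  {O : Set (K × K) | ∃ z : K, O = Apt q u z}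

include hu hK hq2 in
lemma Bset_ncard : (Bset K q u).ncard = q + 1 := by
  have h1 : Bset K q u = Set.range (fun v : Kˣ => Bpt q u (v : K)) := by
    ext O
    constructor
    · rintro ⟨y, hy, rfl⟩; exact ⟨Units.mk0 y hy, rfl⟩
    · rintro ⟨v, rfl⟩; exact ⟨(v : K), v.ne_zero, rfl⟩
  rw [h1]
  apply coset_range_ncard hu hK hq2
  · rintro a b ⟨v, hv0, hvq, hv⟩
    show Bpt q u (a : K) = Bpt q u (b : K)
    rw [hv, Bpt_smul hu hK hq2 a.ne_zero hv0 hvq]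
  · intro a b h
    exact Bpt_eq_iff hu hK hq2 a.ne_zero h

include hu hK hq2 in
lemma Aset_ncard : (Aset K q u).ncard = q ^ 2 := by
  have h1 : Aset K q u = Set.range (Apt q u) := by
    ext O; exact ⟨fun ⟨z, hz⟩ => ⟨z, hz.symm⟩, fun ⟨z, hz⟩ => ⟨z, hz.symm⟩⟩
  rw [h1, ← Set.image_univ,
    Set.ncard_image_of_injective _ (fun z z' h => Apt_inj h), Set.ncard_univ,
    Nat.card_eq_fintype_card, hK]

include hu hK hq2 in
lemma OmegaSet_eq : OmegaSet K q u = Aset K q u ∪ Bset K q u := by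
  ext O
  rw [mem_OmegaSet hu O]
  constructor
  · rintro (⟨z, rfl⟩ | ⟨y, hy, rfl⟩)
    · exact Or.inl ⟨z, rfl⟩
    · exact Or.inr ⟨y, hy, rfl⟩
  · rintro (⟨z, rfl⟩ | ⟨y, hy, rfl⟩)
    · exact Or.inl ⟨z, rfl⟩
    · exact Or.inr ⟨y, hy, rfl⟩

include hu hK hq2 in
lemma AB_disjoint : Disjoint (Aset K q u) (Bset K q u) := by
  rw [Set.disjoint_left]
  rintro O ⟨z, rfl⟩ ⟨y, hy, heq⟩
  exact Apt_ne_Bpt z y heq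

include hu hK hq2 in
lemma OmegaSet_ncard : (OmegaSet K q u).ncard = q ^ 2 + q + 1 := by
  rw [OmegaSet_eq hu hK hq2,
    Set.ncard_union_eq (AB_disjoint hu hK hq2) (Set.toFinite _) (Set.toFinite _),
    Aset_ncard hu hK hq2, Bset_ncard hu hK hq2]
  ring

include hu hK hq2 in
lemma lineInf_eq_Bset : lineInf K q u = Bset K q u := by
  ext O
  constructor
  · rintro ⟨hO, hsub⟩
    rcases (mem_OmegaSet hu O).1 hO with ⟨z, rfl⟩ | ⟨y, hy, rfl⟩
    · exact absurd ⟨hO, hsub⟩ (Apt_not_mem_lineInf hu z)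
    · exact ⟨y, hy, rfl⟩
  · rintro ⟨y, hy, rfl⟩
    exact Bpt_mem_lineInf hu hK hq2 hy

include hu hK hq2 in
lemma lineInf_ncard : (lineInf K q u).ncard = q + 1 := by
  rw [lineInf_eq_Bset hu hK hq2, Bset_ncard hu hK hq2]

include hu hK hq2 hfa in
lemma lineS_decomp {b : K} (hb : b ≠ 0) :
    ∃ e : K, e ≠ 0 ∧ Tf q b e = 0 ∧
      lineS K q u b = (Apt q u '' {z : K | Tf q b z = 1}) ∪ {Bpt q u e} := by
  obtain ⟨e, he0, he⟩ := ker_desc hu hK hq2 hfa hb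
  have hTe : Tf q b e = 0 := (he e).2 ⟨1, one_pow q, (one_mul e).symm⟩
  refine ⟨e, he0, hTe, ?_⟩
  ext O
  constructor
  · intro hO
    rcases (mem_OmegaSet hu O).1 hO.1 with ⟨z, rfl⟩ | ⟨y, hy, rfl⟩
    · exact Or.inl ⟨z, (Apt_mem_lineS hu hK hq2 z b).1 hO, rfl⟩
    · right
      have hTy : Tf q b y = 0 := (Bpt_mem_lineS hu hK hq2 hy b).1 hO
      obtain ⟨t, htq, rfl⟩ := (he y).1 hTy
      have ht0 : t ≠ 0 := fun h => hy (by rw [h, zero_mul])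
      rw [Set.mem_singleton_iff, Bpt_smul hu hK hq2 he0 ht0 htq]
  · rintro (⟨z, hz, rfl⟩ | hO)
    · exact (Apt_mem_lineS hu hK hq2 z b).2 hz
    · rw [Set.mem_singleton_iff] at hO
      rw [hO]
      exact (Bpt_mem_lineS hu hK hq2 he0 b).2 hTe

include hu hK hq2 hfa in
lemma lineS_ncard {b : K} (hb : b ≠ 0) : (lineS K q u b).ncard = q + 1 := by
  obtain ⟨e, he0, hTe, hdec⟩ := lineS_decomp hu hK hq2 hfa hb
  rw [hdec]
  have hdisj : Disjoint (Apt q u '' {z : K | Tf q b z = 1}) ({Bpt q u e} : Set (Set (K × K))) := by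
    rw [Set.disjoint_right]
    rintro O hO ⟨z, hz, heq⟩
    rw [Set.mem_singleton_iff] at hO
    exact Apt_ne_Bpt z e (heq.trans hO)
  rw [Set.ncard_union_eq hdisj (Set.toFinite _) (Set.toFinite _),
    Set.ncard_image_of_injective _ (fun z z' h => Apt_inj h),
    (Tf_fibers hu hK hq2 hfa hb (by rw [one_pow] : (1:K) ^ q = 1)).2, Set.ncard_singleton]

include hu hK hq2 hfa in
lemma lineC_decomp {c : K} (hc : c ≠ 0) :
    ∃ e : K, e ≠ 0 ∧ Tf q (c ^ q) e = 0 ∧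
      lineC K q u c = (Apt q u '' {z : K | Tf q (c ^ q) z = 0}) ∪ {Bpt q u e} := by
  have hcq : c ^ q ≠ 0 := pow_ne_zero _ hc
  obtain ⟨e, he0, he⟩ := ker_desc hu hK hq2 hfa hcq
  have hTe : Tf q (c ^ q) e = 0 := (he e).2 ⟨1, one_pow q, (one_mul e).symm⟩
  refine ⟨e, he0, hTe, ?_⟩
  ext O
  constructor
  · intro hO
    rcases (mem_OmegaSet hu O).1 hO.1 with ⟨z, rfl⟩ | ⟨y, hy, rfl⟩
    · exact Or.inl ⟨z, (Apt_mem_lineC hu hK hq2 z c).1 hO, rfl⟩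
    · right
      have hTy : Tf q (c ^ q) y = 0 := (Bpt_mem_lineC hu hK hq2 hy c).1 hO
      obtain ⟨t, htq, rfl⟩ := (he y).1 hTy
      have ht0 : t ≠ 0 := fun h => hy (by rw [h, zero_mul])
      rw [Set.mem_singleton_iff, Bpt_smul hu hK hq2 he0 ht0 htq]
  · rintro (⟨z, hz, rfl⟩ | hO)
    · exact (Apt_mem_lineC hu hK hq2 z c).2 hz
    · rw [Set.mem_singleton_iff] at hO
      rw [hO]
      exact (Bpt_mem_lineC hu hK hq2 he0 c).2 hTe

include hu hK hq2 hfa in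
lemma lineC_ncard {c : K} (hc : c ≠ 0) : (lineC K q u c).ncard = q + 1 := by
  obtain ⟨e, he0, hTe, hdec⟩ := lineC_decomp hu hK hq2 hfa hc
  rw [hdec]
  have hdisj : Disjoint (Apt q u '' {z : K | Tf q (c ^ q) z = 0})
      ({Bpt q u e} : Set (Set (K × K))) := by
    rw [Set.disjoint_right]
    rintro O hO ⟨z, hz, heq⟩
    rw [Set.mem_singleton_iff] at hO
    exact Apt_ne_Bpt z e (heq.trans hO)
  rw [Set.ncard_union_eq hdisj (Set.toFinite _) (Set.toFinite _),
    Set.ncard_image_of_injective _ (fun z z' h => Apt_inj h),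
    ker_ncard hu hK hq2 hfa (pow_ne_zero _ hc), Set.ncard_singleton]

/-- Hermitian-curve lines. -/
def Sset (K : Type*) [Field K] [Fintype K] (q : ℕ) (u : Kˣ) : Set (Set (Set (K × K))) :=
  {L : Set (Set (K × K)) | ∃ b : K, b ≠ 0 ∧ L = lineS K q u b}

/-- Cone lines. -/
def Cset (K : Type*) [Field K] [Fintype K] (q : ℕ) (u : Kˣ) : Set (Set (Set (K × K))) :=
  {L : Set (Set (K × K)) | ∃ c : K, c ≠ 0 ∧ L = lineC K q u c}

include hu hK hq2 hfa in
lemma Sset_ncard : (Sset K q u).ncard = q ^ 2 - 1 := by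
  have h1 : Sset K q u = lineS K q u '' {b : K | b ≠ 0} := by
    ext L
    constructor
    · rintro ⟨b, hb, rfl⟩; exact ⟨b, hb, rfl⟩
    · rintro ⟨b, hb, rfl⟩; exact ⟨b, hb, rfl⟩
  have hinjon : Set.InjOn (lineS K q u) {b : K | b ≠ 0} :=
    fun b hb b' hb' h => lineS_inj hu hK hq2 hfa hb hb' h
  rw [h1, Set.ncard_image_of_injOn hinjon]
  have h2 : (Set.univ : Set K) = insert 0 {b : K | b ≠ 0} := by
    ext b; simp [eq_comm, em]
  have h3 : (Set.univ : Set K).ncard = q ^ 2 := by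
    rw [Set.ncard_univ, Nat.card_eq_fintype_card, hK]
  rw [h2, Set.ncard_insert_of_notMem (by simp) (Set.toFinite _)] at h3
  omega

include hu hK hq2 hfa in
lemma Cset_ncard : (Cset K q u).ncard = q + 1 := by
  have h1 : Cset K q u = Set.range (fun c : Kˣ => lineC K q u (c : K)) := by
    ext L
    constructor
    · rintro ⟨c, hc, rfl⟩; exact ⟨Units.mk0 c hc, rfl⟩
    · rintro ⟨c, rfl⟩; exact ⟨(c : K), c.ne_zero, rfl⟩
  rw [h1]
  apply coset_range_ncard hu hK hq2
  · rintro a b ⟨v, hv0, hvq, hv⟩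
    show lineC K q u (a : K) = lineC K q u (b : K)
    rw [hv, lineC_smul hu hK hq2 hv0 hvq]
  · intro a b h
    exact lineC_eq_iff hu hK hq2 hfa a.ne_zero b.ne_zero h

end counting

section axioms

variable {q : ℕ} {u : Kˣ} (hu : ∀ x : Kˣ, x ∈ Subgroup.zpowers u)
variable (hK : Fintype.card K = q ^ 2) (hq2 : 2 < q)
variable (hfa : ∀ x y : K, (x + y) ^ q = x ^ q + y ^ q)

include hu hK hq2 in
lemma mem_lineS_cases {b : K} {O : Set (K × K)} (hO : O ∈ lineS K q u b) :
    (∃ z : K, O = Apt q u z ∧ Tf q b z = 1) ∨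
      (∃ y : K, y ≠ 0 ∧ O = Bpt q u y ∧ Tf q b y = 0) := by
  rcases (mem_OmegaSet hu O).1 hO.1 with ⟨z, rfl⟩ | ⟨y, hy, rfl⟩
  · exact Or.inl ⟨z, rfl, (Apt_mem_lineS hu hK hq2 z b).1 hO⟩
  · exact Or.inr ⟨y, hy, rfl, (Bpt_mem_lineS hu hK hq2 hy b).1 hO⟩

include hu hK hq2 in
lemma mem_lineC_cases {c : K} {O : Set (K × K)} (hO : O ∈ lineC K q u c) :
    (∃ z : K, O = Apt q u z ∧ Tf q (c ^ q) z = 0) ∨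
      (∃ y : K, y ≠ 0 ∧ O = Bpt q u y ∧ Tf q (c ^ q) y = 0) := by
  rcases (mem_OmegaSet hu O).1 hO.1 with ⟨z, rfl⟩ | ⟨y, hy, rfl⟩
  · exact Or.inl ⟨z, rfl, (Apt_mem_lineC hu hK hq2 z c).1 hO⟩
  · exact Or.inr ⟨y, hy, rfl, (Bpt_mem_lineC hu hK hq2 hy c).1 hO⟩

include hu hK hq2 in
lemma mem_lineInf_cases {O : Set (K × K)} (hO : O ∈ lineInf K q u) :
    ∃ y : K, y ≠ 0 ∧ O = Bpt q u y := by
  rw [lineInf_eq_Bset hu hK hq2] at hO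
  obtain ⟨y, hy, rfl⟩ := hO
  exact ⟨y, hy, rfl⟩

include hu hK hq2 hfa in
lemma meet_Inf_S {b : K} (hb : b ≠ 0) :
    ∃! O : Set (K × K), O ∈ lineInf K q u ∧ O ∈ lineS K q u b := by
  obtain ⟨e, he0, he⟩ := ker_desc hu hK hq2 hfa hb
  have hTe : Tf q b e = 0 := (he e).2 ⟨1, one_pow q, (one_mul e).symm⟩
  refine ⟨Bpt q u e, ⟨Bpt_mem_lineInf hu hK hq2 he0, (Bpt_mem_lineS hu hK hq2 he0 b).2 hTe⟩, ?_⟩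
  rintro O ⟨hO1, hO2⟩
  obtain ⟨y, hy, rfl⟩ := mem_lineInf_cases hu hK hq2 hO1
  have hTy : Tf q b y = 0 := (Bpt_mem_lineS hu hK hq2 hy b).1 hO2
  obtain ⟨t, htq, rfl⟩ := (he y).1 hTy
  have ht0 : t ≠ 0 := fun h => hy (by rw [h, zero_mul])
  exact Bpt_smul hu hK hq2 he0 ht0 htq

include hu hK hq2 hfa in
lemma meet_Inf_C {c : K} (hc : c ≠ 0) :
    ∃! O : Set (K × K), O ∈ lineInf K q u ∧ O ∈ lineC K q u c := by
  have hcq : c ^ q ≠ 0 := pow_ne_zero _ hc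
  obtain ⟨e, he0, he⟩ := ker_desc hu hK hq2 hfa hcq
  have hTe : Tf q (c ^ q) e = 0 := (he e).2 ⟨1, one_pow q, (one_mul e).symm⟩
  refine ⟨Bpt q u e, ⟨Bpt_mem_lineInf hu hK hq2 he0, (Bpt_mem_lineC hu hK hq2 he0 c).2 hTe⟩, ?_⟩
  rintro O ⟨hO1, hO2⟩
  obtain ⟨y, hy, rfl⟩ := mem_lineInf_cases hu hK hq2 hO1
  have hTy : Tf q (c ^ q) y = 0 := (Bpt_mem_lineC hu hK hq2 hy c).1 hO2
  obtain ⟨t, htq, rfl⟩ := (he y).1 hTy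
  have ht0 : t ≠ 0 := fun h => hy (by rw [h, zero_mul])
  exact Bpt_smul hu hK hq2 he0 ht0 htq

include hu hK hq2 hfa in
lemma meet_S_S {b b' : K} (hb : b ≠ 0) (hb' : b' ≠ 0)
    (hne : lineS K q u b ≠ lineS K q u b') :
    ∃! O : Set (K × K), O ∈ lineS K q u b ∧ O ∈ lineS K q u b' := by
  have hbb' : b ≠ b' := fun h => hne (by rw [h])
  by_cases hdep : ∃ t : K, t ≠ 0 ∧ t ^ q = t ∧ b' = t * b
  · obtain ⟨t, ht0, htq, rfl⟩ := hdep
    have ht1 : t ≠ 1 := fun h => hbb' (by rw [h, one_mul])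
    obtain ⟨e, he0, he⟩ := ker_desc hu hK hq2 hfa hb
    have hTe : Tf q b e = 0 := (he e).2 ⟨1, one_pow q, (one_mul e).symm⟩
    have hTe' : Tf q (t * b) e = 0 := by rw [Tf_smul_left htq, hTe, mul_zero]
    refine ⟨Bpt q u e, ⟨(Bpt_mem_lineS hu hK hq2 he0 b).2 hTe,
      (Bpt_mem_lineS hu hK hq2 he0 (t * b)).2 hTe'⟩, ?_⟩
    rintro O ⟨hO1, hO2⟩
    rcases mem_lineS_cases hu hK hq2 hO1 with ⟨z, rfl, hz1⟩ | ⟨y, hy, rfl, hy1⟩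
    · have hz2 : Tf q (t * b) z = 1 := (Apt_mem_lineS hu hK hq2 z (t * b)).1 hO2
      rw [Tf_smul_left htq, hz1, mul_one] at hz2
      exact absurd hz2 ht1
    · obtain ⟨s, hsq, rfl⟩ := (he y).1 hy1
      have hs0 : s ≠ 0 := fun h => hy (by rw [h, zero_mul])
      exact Bpt_smul hu hK hq2 he0 hs0 hsq
  · have hδ : b - b' ≠ 0 := sub_ne_zero.2 hbb'
    obtain ⟨e, he0, he⟩ := ker_desc hu hK hq2 hfa hδ
    have hTδe : Tf q (b - b') e = 0 := (he e).2 ⟨1, one_pow q, (one_mul e).symm⟩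
    have hs : Tf q b e ≠ 0 := by
      intro h0
      have h1 : Tf q b' e = 0 := by
        have h2 := Tf_sub_left hfa hq2 b b' e
        rw [hTδe, h0] at h2
        linear_combination h2
      obtain ⟨t, ht0, htq, hteq⟩ := dep_of_common_perp hu hK hq2 hfa hb hb' he0 h0 h1
      exact hdep ⟨t, ht0, htq, hteq⟩
    set s := Tf q b e with hsdef
    have hsq : s ^ q = s := Tf_mem hK hfa b e
    have hsinv : (s⁻¹ : K) ^ q = s⁻¹ := F_inv hsq
    set z := s⁻¹ * e with hzdef
    have hz1 : Tf q b z = 1 := by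
      rw [hzdef, Tf_smul_right hsinv, ← hsdef, inv_mul_cancel₀ hs]
    have hz2 : Tf q b' z = 1 := by
      have h3 : Tf q (b - b') z = 0 := by
        rw [hzdef, Tf_smul_right hsinv, hTδe, mul_zero]
      have h4 := Tf_sub_left hfa hq2 b b' z
      rw [h3] at h4
      linear_combination hz1 + h4
    refine ⟨Apt q u z, ⟨(Apt_mem_lineS hu hK hq2 z b).2 hz1,
      (Apt_mem_lineS hu hK hq2 z b').2 hz2⟩, ?_⟩
    rintro O ⟨hO1, hO2⟩
    rcases mem_lineS_cases hu hK hq2 hO1 with ⟨z', rfl, hz'1⟩ | ⟨y, hy, rfl, hy1⟩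
    · have hz'2 : Tf q b' z' = 1 := (Apt_mem_lineS hu hK hq2 z' b').1 hO2
      have h5 : Tf q (b - b') z' = 0 := by
        rw [Tf_sub_left hfa hq2, hz'1, hz'2, sub_self]
      obtain ⟨t, htq, rfl⟩ := (he z').1 h5
      have h6 : t * s = 1 := by
        rw [hsdef, ← Tf_smul_right htq]; exact hz'1
      have ht0 : t ≠ 0 := fun h => by rw [h, zero_mul] at h6; exact zero_ne_one h6
      have h7 : t = s⁻¹ := eq_inv_of_mul_eq_one_left h6
      rw [h7]
    · have hy2 : Tf q b' y = 0 := (Bpt_mem_lineS hu hK hq2 hy b').1 hO2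
      obtain ⟨t, ht0, htq, hteq⟩ := dep_of_common_perp hu hK hq2 hfa hb hb' hy hy1 hy2
      exact absurd ⟨t, ht0, htq, hteq⟩ hdep

include hu hK hq2 hfa in
lemma meet_S_C {b c : K} (hb : b ≠ 0) (hc : c ≠ 0) :
    ∃! O : Set (K × K), O ∈ lineS K q u b ∧ O ∈ lineC K q u c := by
  have hcq : c ^ q ≠ 0 := pow_ne_zero _ hc
  obtain ⟨e, he0, he⟩ := ker_desc hu hK hq2 hfa hcq
  have hTe : Tf q (c ^ q) e = 0 := (he e).2 ⟨1, one_pow q, (one_mul e).symm⟩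
  by_cases hdep : ∃ t : K, t ≠ 0 ∧ t ^ q = t ∧ b = t * c ^ q
  · obtain ⟨t, ht0, htq, rfl⟩ := hdep
    have hTbe : Tf q (t * c ^ q) e = 0 := by rw [Tf_smul_left htq, hTe, mul_zero]
    refine ⟨Bpt q u e, ⟨(Bpt_mem_lineS hu hK hq2 he0 _).2 hTbe,
      (Bpt_mem_lineC hu hK hq2 he0 c).2 hTe⟩, ?_⟩
    rintro O ⟨hO1, hO2⟩
    rcases mem_lineC_cases hu hK hq2 hO2 with ⟨z, rfl, hz1⟩ | ⟨y, hy, rfl, hy1⟩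
    · have hz2 : Tf q (t * c ^ q) z = 1 := (Apt_mem_lineS hu hK hq2 z _).1 hO1
      rw [Tf_smul_left htq, hz1, mul_zero] at hz2
      exact absurd hz2.symm one_ne_zero
    · obtain ⟨s, hsq, rfl⟩ := (he y).1 hy1
      have hs0 : s ≠ 0 := fun h => hy (by rw [h, zero_mul])
      exact Bpt_smul hu hK hq2 he0 hs0 hsq
  · have hs : Tf q b e ≠ 0 := by
      intro h0
      obtain ⟨t, ht0, htq, hteq⟩ := dep_of_common_perp hu hK hq2 hfa hcq hb he0 hTe h0
      exact hdep ⟨t, ht0, htq, hteq⟩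
    set s := Tf q b e with hsdef
    have hsq : s ^ q = s := Tf_mem hK hfa b e
    have hsinv : (s⁻¹ : K) ^ q = s⁻¹ := F_inv hsq
    set z := s⁻¹ * e with hzdef
    have hz1 : Tf q b z = 1 := by
      rw [hzdef, Tf_smul_right hsinv, ← hsdef, inv_mul_cancel₀ hs]
    have hz2 : Tf q (c ^ q) z = 0 := by
      rw [hzdef, Tf_smul_right hsinv, hTe, mul_zero]
    refine ⟨Apt q u z, ⟨(Apt_mem_lineS hu hK hq2 z b).2 hz1,
      (Apt_mem_lineC hu hK hq2 z c).2 hz2⟩, ?_⟩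
    rintro O ⟨hO1, hO2⟩
    rcases mem_lineC_cases hu hK hq2 hO2 with ⟨z', rfl, hz'1⟩ | ⟨y, hy, rfl, hy1⟩
    · obtain ⟨t, htq, rfl⟩ := (he z').1 hz'1
      have hz'2 : Tf q b (t * e) = 1 := (Apt_mem_lineS hu hK hq2 _ b).1 hO1
      rw [Tf_smul_right htq, ← hsdef] at hz'2
      have ht0 : t ≠ 0 := fun h => by rw [h, zero_mul] at hz'2; exact zero_ne_one hz'2
      have h7 : t = s⁻¹ := eq_inv_of_mul_eq_one_left hz'2
      rw [h7]
    · have hy2 : Tf q b y = 0 := (Bpt_mem_lineS hu hK hq2 hy b).1 hO1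
      obtain ⟨t, ht0, htq, hteq⟩ := dep_of_common_perp hu hK hq2 hfa hcq hb hy hy1 hy2
      exact absurd ⟨t, ht0, htq, hteq⟩ hdep

include hu hK hq2 hfa in
lemma meet_C_C {c c' : K} (hc : c ≠ 0) (hc' : c' ≠ 0)
    (hne : lineC K q u c ≠ lineC K q u c') :
    ∃! O : Set (K × K), O ∈ lineC K q u c ∧ O ∈ lineC K q u c' := by
  have hcq : c ^ q ≠ 0 := pow_ne_zero _ hc
  have hcq' : c' ^ q ≠ 0 := pow_ne_zero _ hc'
  have hkey : ∀ w : K, w ≠ 0 → Tf q (c ^ q) w = 0 → Tf q (c' ^ q) w = 0 → False := by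
    intro w hw h1 h2
    obtain ⟨t, ht0, htq, hteq⟩ := dep_of_common_perp hu hK hq2 hfa hcq hcq' hw h1 h2
    apply hne
    have h3 : c' = t * c := by
      apply frob_inj hK
      rw [hteq, mul_pow, htq]
    rw [h3, lineC_smul hu hK hq2 ht0 htq]
  refine ⟨Apt q u 0, ⟨Apt_zero_mem_lineC hu hK hq2 c, Apt_zero_mem_lineC hu hK hq2 c'⟩, ?_⟩
  rintro O ⟨hO1, hO2⟩
  rcases mem_lineC_cases hu hK hq2 hO1 with ⟨z, rfl, hz1⟩ | ⟨y, hy, rfl, hy1⟩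
  · have hz2 : Tf q (c' ^ q) z = 0 := (Apt_mem_lineC hu hK hq2 z c').1 hO2
    rcases eq_or_ne z 0 with rfl | hz0
    · rfl
    · exact absurd (hkey z hz0 hz1 hz2) (fun h => h)
  · have hy2 : Tf q (c' ^ q) y = 0 := (Bpt_mem_lineC hu hK hq2 hy c').1 hO2
    exact absurd (hkey y hy hy1 hy2) (fun h => h)

end axioms

section joins

variable {q : ℕ} {u : Kˣ} (hu : ∀ x : Kˣ, x ∈ Subgroup.zpowers u)
variable (hK : Fintype.card K = q ^ 2) (hq2 : 2 < q)
variable (hfa : ∀ x y : K, (x + y) ^ q = x ^ q + y ^ q)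

/-- The set of lines. -/
def LinsSet (K : Type*) [Field K] [Fintype K] (q : ℕ) (u : Kˣ) : Set (Set (Set (K × K))) :=
  insert (lineInf K q u) (Sset K q u ∪ Cset K q u)

lemma mem_LinsSet (L : Set (Set (K × K))) :
    L ∈ LinsSet K q u ↔ L = lineInf K q u ∨ (∃ b : K, b ≠ 0 ∧ L = lineS K q u b) ∨
      (∃ c : K, c ≠ 0 ∧ L = lineC K q u c) := by
  simp only [LinsSet, Set.mem_insert_iff, Set.mem_union]
  rfl

include hu hK hq2 hfa in
lemma LinsSet_ncard : (LinsSet K q u).ncard = q ^ 2 + q + 1 := by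
  have hd1 : lineInf K q u ∉ Sset K q u ∪ Cset K q u := by
    rintro (⟨b, hb, heq⟩ | ⟨c, hc, heq⟩)
    · exact lineS_ne_lineInf hu hK hq2 hfa hb heq.symm
    · exact lineC_ne_lineInf hu hK hq2 c heq.symm
  have hd2 : Disjoint (Sset K q u) (Cset K q u) := by
    rw [Set.disjoint_left]
    rintro L ⟨b, hb, rfl⟩ ⟨c, hc, heq⟩
    exact lineS_ne_lineC hu hK hq2 b c heq
  rw [LinsSet, Set.ncard_insert_of_notMem hd1 (Set.toFinite _),
    Set.ncard_union_eq hd2 (Set.toFinite _) (Set.toFinite _),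
    Sset_ncard hu hK hq2 hfa, Cset_ncard hu hK hq2 hfa]
  have hpos : 0 < q ^ 2 := pow_pos (by omega) 2
  omega

include hu hK hq2 hfa in
lemma Bpt_eq_of_common_ker {b y y' : K} (hb : b ≠ 0) (hy : y ≠ 0) (hy' : y' ≠ 0)
    (h1 : Tf q b y = 0) (h2 : Tf q b y' = 0) : Bpt q u y' = Bpt q u y := by
  obtain ⟨e, he0, he⟩ := ker_desc hu hK hq2 hfa hb
  obtain ⟨t, htq, rfl⟩ := (he y).1 h1
  obtain ⟨t', htq', rfl⟩ := (he y').1 h2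
  have ht0 : t ≠ 0 := fun h => hy (by rw [h, zero_mul])
  have ht0' : t' ≠ 0 := fun h => hy' (by rw [h, zero_mul])
  have hv : t' * e = (t' * t⁻¹) * (t * e) := by field_simp
  rw [hv, Bpt_smul hu hK hq2 (mul_ne_zero ht0 he0)
    (mul_ne_zero ht0' (inv_ne_zero ht0)) (F_mul htq' (F_inv htq))]

include hu hK hq2 hfa in
lemma join_B_B {y y' : K} (hy : y ≠ 0) (hy' : y' ≠ 0) (hne : Bpt q u y ≠ Bpt q u y') :
    ∃! L : Set (Set (K × K)), L ∈ LinsSet K q u ∧ Bpt q u y ∈ L ∧ Bpt q u y' ∈ L := by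
  refine ⟨lineInf K q u, ⟨(mem_LinsSet _).2 (Or.inl rfl),
    Bpt_mem_lineInf hu hK hq2 hy, Bpt_mem_lineInf hu hK hq2 hy'⟩, ?_⟩
  rintro L ⟨hL, hm1, hm2⟩
  rcases (mem_LinsSet L).1 hL with rfl | ⟨b, hb, rfl⟩ | ⟨c, hc, rfl⟩
  · rfl
  · have h1 : Tf q b y = 0 := (Bpt_mem_lineS hu hK hq2 hy b).1 hm1
    have h2 : Tf q b y' = 0 := (Bpt_mem_lineS hu hK hq2 hy' b).1 hm2
    exact absurd (Bpt_eq_of_common_ker hu hK hq2 hfa hb hy hy' h1 h2).symm hne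
  · have h1 : Tf q (c ^ q) y = 0 := (Bpt_mem_lineC hu hK hq2 hy c).1 hm1
    have h2 : Tf q (c ^ q) y' = 0 := (Bpt_mem_lineC hu hK hq2 hy' c).1 hm2
    exact absurd (Bpt_eq_of_common_ker hu hK hq2 hfa (pow_ne_zero _ hc) hy hy' h1 h2).symm hne

include hu hK hq2 hfa in
lemma join_A_B (z : K) {y : K} (hy : y ≠ 0) :
    ∃! L : Set (Set (K × K)), L ∈ LinsSet K q u ∧ Apt q u z ∈ L ∧ Bpt q u y ∈ L := by
  obtain ⟨d, hd0, hd⟩ := perp hu hK hq2 hfa hy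
  have hTdy : Tf q d y = 0 := (hd d).2 ⟨1, one_pow q, (one_mul d).symm⟩
  have hdq0 : d ^ q ≠ 0 := pow_ne_zero _ hd0
  by_cases hdz : Tf q d z = 0
  · -- the line is the cone line for d^q
    refine ⟨lineC K q u (d ^ q), ⟨(mem_LinsSet _).2 (Or.inr (Or.inr ⟨d ^ q, hdq0, rfl⟩)),
      (Apt_mem_lineC hu hK hq2 z (d ^ q)).2 (by rw [pow_qq hK]; exact hdz),
      (Bpt_mem_lineC hu hK hq2 hy (d ^ q)).2 (by rw [pow_qq hK]; exact hTdy)⟩, ?_⟩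
    rintro L ⟨hL, hm1, hm2⟩
    rcases (mem_LinsSet L).1 hL with rfl | ⟨b, hb, rfl⟩ | ⟨c, hc, rfl⟩
    · exact absurd hm1 (Apt_not_mem_lineInf hu z)
    · have h1 : Tf q b y = 0 := (Bpt_mem_lineS hu hK hq2 hy b).1 hm2
      obtain ⟨t, htq, rfl⟩ := (hd b).1 h1
      have ht0 : t ≠ 0 := fun h => hb (by rw [h, zero_mul])
      have h2 : Tf q (t * d) z = 1 := (Apt_mem_lineS hu hK hq2 z _).1 hm1
      rw [Tf_smul_left htq, hdz, mul_zero] at h2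
      exact absurd h2.symm one_ne_zero
    · have h1 : Tf q (c ^ q) y = 0 := (Bpt_mem_lineC hu hK hq2 hy c).1 hm2
      obtain ⟨t, htq, hteq⟩ := (hd (c ^ q)).1 h1
      have ht0 : t ≠ 0 := fun h => (pow_ne_zero q hc) (by rw [hteq, h, zero_mul])
      have hceq : c = t * d ^ q := by
        apply frob_inj hK
        rw [mul_pow, htq, pow_qq hK, hteq]
      rw [hceq, lineC_smul hu hK hq2 ht0 htq]
  · set s := Tf q d z with hsdef
    have hsq : s ^ q = s := Tf_mem hK hfa d z
    have hsinv : (s⁻¹ : K) ^ q = s⁻¹ := F_inv hsq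
    have hb0 : s⁻¹ * d ≠ 0 := mul_ne_zero (inv_ne_zero hdz) hd0
    refine ⟨lineS K q u (s⁻¹ * d), ⟨(mem_LinsSet _).2 (Or.inr (Or.inl ⟨s⁻¹ * d, hb0, rfl⟩)),
      (Apt_mem_lineS hu hK hq2 z _).2 (by
        rw [Tf_smul_left hsinv, ← hsdef, inv_mul_cancel₀ hdz]),
      (Bpt_mem_lineS hu hK hq2 hy _).2 (by rw [Tf_smul_left hsinv, hTdy, mul_zero])⟩, ?_⟩
    rintro L ⟨hL, hm1, hm2⟩
    rcases (mem_LinsSet L).1 hL with rfl | ⟨b, hb, rfl⟩ | ⟨c, hc, rfl⟩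
    · exact absurd hm1 (Apt_not_mem_lineInf hu z)
    · have h1 : Tf q b y = 0 := (Bpt_mem_lineS hu hK hq2 hy b).1 hm2
      obtain ⟨t, htq, rfl⟩ := (hd b).1 h1
      have h2 : Tf q (t * d) z = 1 := (Apt_mem_lineS hu hK hq2 z _).1 hm1
      rw [Tf_smul_left htq, ← hsdef] at h2
      have h7 : t = s⁻¹ := eq_inv_of_mul_eq_one_left h2
      rw [h7]
    · have h1 : Tf q (c ^ q) y = 0 := (Bpt_mem_lineC hu hK hq2 hy c).1 hm2
      obtain ⟨t, htq, hteq⟩ := (hd (c ^ q)).1 h1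
      have ht0 : t ≠ 0 := fun h => (pow_ne_zero q hc) (by rw [hteq, h, zero_mul])
      have h2 : Tf q (c ^ q) z = 0 := (Apt_mem_lineC hu hK hq2 z c).1 hm1
      rw [hteq, Tf_smul_left htq, ← hsdef] at h2
      exact absurd h2 (mul_ne_zero ht0 hdz)

include hu hK hq2 hfa in
lemma join_A_A {z z' : K} (hne : z ≠ z') :
    ∃! L : Set (Set (K × K)), L ∈ LinsSet K q u ∧ Apt q u z ∈ L ∧ Apt q u z' ∈ L := by
  have hw : z - z' ≠ 0 := sub_ne_zero.2 hne
  obtain ⟨d, hd0, hd⟩ := perp hu hK hq2 hfa hw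
  have hTdw : Tf q d (z - z') = 0 := (hd d).2 ⟨1, one_pow q, (one_mul d).symm⟩
  have hdq0 : d ^ q ≠ 0 := pow_ne_zero _ hd0
  by_cases hdz : Tf q d z = 0
  · have hdz' : Tf q d z' = 0 := by
      have h1 := Tf_sub_right hfa hq2 d z z'
      rw [hTdw, hdz] at h1
      linear_combination h1
    refine ⟨lineC K q u (d ^ q), ⟨(mem_LinsSet _).2 (Or.inr (Or.inr ⟨d ^ q, hdq0, rfl⟩)),
      (Apt_mem_lineC hu hK hq2 z (d ^ q)).2 (by rw [pow_qq hK]; exact hdz),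
      (Apt_mem_lineC hu hK hq2 z' (d ^ q)).2 (by rw [pow_qq hK]; exact hdz')⟩, ?_⟩
    rintro L ⟨hL, hm1, hm2⟩
    rcases (mem_LinsSet L).1 hL with rfl | ⟨b, hb, rfl⟩ | ⟨c, hc, rfl⟩
    · exact absurd hm1 (Apt_not_mem_lineInf hu z)
    · have h1 : Tf q b z = 1 := (Apt_mem_lineS hu hK hq2 z b).1 hm1
      have h2 : Tf q b z' = 1 := (Apt_mem_lineS hu hK hq2 z' b).1 hm2
      have h3 : Tf q b (z - z') = 0 := by
        rw [Tf_sub_right hfa hq2, h1, h2, sub_self]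
      obtain ⟨t, htq, rfl⟩ := (hd b).1 h3
      rw [Tf_smul_left htq, hdz, mul_zero] at h1
      exact absurd h1.symm one_ne_zero
    · have h1 : Tf q (c ^ q) z = 0 := (Apt_mem_lineC hu hK hq2 z c).1 hm1
      have h2 : Tf q (c ^ q) z' = 0 := (Apt_mem_lineC hu hK hq2 z' c).1 hm2
      have h3 : Tf q (c ^ q) (z - z') = 0 := by
        rw [Tf_sub_right hfa hq2, h1, h2, sub_self]
      obtain ⟨t, htq, hteq⟩ := (hd (c ^ q)).1 h3
      have ht0 : t ≠ 0 := fun h => (pow_ne_zero q hc) (by rw [hteq, h, zero_mul])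
      have hceq : c = t * d ^ q := by
        apply frob_inj hK
        rw [mul_pow, htq, pow_qq hK, hteq]
      rw [hceq, lineC_smul hu hK hq2 ht0 htq]
  · set s := Tf q d z with hsdef
    have hsq : s ^ q = s := Tf_mem hK hfa d z
    have hsinv : (s⁻¹ : K) ^ q = s⁻¹ := F_inv hsq
    have hb0 : s⁻¹ * d ≠ 0 := mul_ne_zero (inv_ne_zero hdz) hd0
    have hdz' : Tf q d z' = s := by
      have h1 := Tf_sub_right hfa hq2 d z z'
      rw [hTdw, ← hsdef] at h1
      linear_combination h1
    refine ⟨lineS K q u (s⁻¹ * d), ⟨(mem_LinsSet _).2 (Or.inr (Or.inl ⟨s⁻¹ * d, hb0, rfl⟩)),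
      (Apt_mem_lineS hu hK hq2 z _).2 (by
        rw [Tf_smul_left hsinv, ← hsdef, inv_mul_cancel₀ hdz]),
      (Apt_mem_lineS hu hK hq2 z' _).2 (by
        rw [Tf_smul_left hsinv, hdz', inv_mul_cancel₀ hdz])⟩, ?_⟩
    rintro L ⟨hL, hm1, hm2⟩
    rcases (mem_LinsSet L).1 hL with rfl | ⟨b, hb, rfl⟩ | ⟨c, hc, rfl⟩
    · exact absurd hm1 (Apt_not_mem_lineInf hu z)
    · have h1 : Tf q b z = 1 := (Apt_mem_lineS hu hK hq2 z b).1 hm1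
      have h2 : Tf q b z' = 1 := (Apt_mem_lineS hu hK hq2 z' b).1 hm2
      have h3 : Tf q b (z - z') = 0 := by
        rw [Tf_sub_right hfa hq2, h1, h2, sub_self]
      obtain ⟨t, htq, rfl⟩ := (hd b).1 h3
      rw [Tf_smul_left htq, ← hsdef] at h1
      have h7 : t = s⁻¹ := eq_inv_of_mul_eq_one_left h1
      rw [h7]
    · have h1 : Tf q (c ^ q) z = 0 := (Apt_mem_lineC hu hK hq2 z c).1 hm1
      have h2 : Tf q (c ^ q) z' = 0 := (Apt_mem_lineC hu hK hq2 z' c).1 hm2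
      have h3 : Tf q (c ^ q) (z - z') = 0 := by
        rw [Tf_sub_right hfa hq2, h1, h2, sub_self]
      obtain ⟨t, htq, hteq⟩ := (hd (c ^ q)).1 h3
      have ht0 : t ≠ 0 := fun h => (pow_ne_zero q hc) (by rw [hteq, h, zero_mul])
      rw [hteq, Tf_smul_left htq, ← hsdef] at h1
      exact absurd h1 (mul_ne_zero ht0 hdz)

end joins

lemma eu_and_swap {α : Sort*} {P Q : α → Prop} (h : ∃! x, P x ∧ Q x) :
    ∃! x, Q x ∧ P x := by
  obtain ⟨x, ⟨h1, h2⟩, hx⟩ := h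
  exact ⟨x, ⟨h2, h1⟩, fun y ⟨hy1, hy2⟩ => hx y ⟨hy2, hy1⟩⟩

lemma eu_and_swap23 {α : Sort*} {P Q R : α → Prop} (h : ∃! x, P x ∧ Q x ∧ R x) :
    ∃! x, P x ∧ R x ∧ Q x := by
  obtain ⟨x, ⟨h1, h2, h3⟩, hx⟩ := h
  exact ⟨x, ⟨h1, h3, h2⟩, fun y ⟨hy1, hy2, hy3⟩ => hx y ⟨hy1, hy3, hy2⟩⟩

lemma frob_of_card (q : ℕ) (hq : IsPrimePow q)
    (hK : Fintype.card K = q ^ 2) : ∀ x y : K, (x + y) ^ q = x ^ q + y ^ q := by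
  obtain ⟨p, n, hp, hn, rfl⟩ := hq
  have hp' : Nat.Prime p := hp.nat_prime
  set p' := ringChar K with hp'def
  haveI : CharP K p' := ringChar.charP K
  obtain ⟨m, hm, hcard⟩ := FiniteField.card K p'
  have hpp : p' = p := by
    have h1 : p' ^ (m : ℕ) = p ^ (2 * n) := by rw [← hcard, hK]; ring
    have h2 : p' ∣ p ^ (2 * n) := h1 ▸ dvd_pow_self p' m.pos.ne'
    exact (Nat.prime_dvd_prime_iff_eq hm hp').1 (hm.dvd_of_dvd_pow h2)
  haveI : CharP K p := hpp ▸ (ringChar.charP K)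
  haveI := Fact.mk hp'
  intro x y
  exact add_pow_char_pow (x := x) (y := y) p n

end PPlane

/-- The incidence structure whose points are the orbits of `G = ⟨(x,y) ↦ (λx, λ^{q+1}y)⟩` on
`(K × K) \ {0}` and whose lines are (i) the orbits on the punctured line `x = 0`, (ii) for each
`b ∈ K*` the orbits contained in the punctured affine Hermitian curve `S_b`, and (iii) for each
coset of `F_q*` in `K*` the orbits contained in the corresponding affine Hermitian cone, is a
projective plane of order `q`. -/
theorem orbit_incidence_structure_is_projective_plane
    (q : ℕ) (hq : IsPrimePow q) (hq2 : 2 < q)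
    (K : Type*) [Field K] [Fintype K] (hK : Fintype.card K = q ^ 2)
    (u : Kˣ) (hu : ∀ x : Kˣ, x ∈ Subgroup.zpowers u) :
    ∀ Ω : Set (Set (K × K)), ∀ Lins : Set (Set (Set (K × K))),
      Ω = {O : Set (K × K) | ∃ s : K × K, s ≠ (0, 0) ∧ O = MulAction.orbit (gGroup q u) s} →
      Lins = {L : Set (Set (K × K)) |
          L = {O ∈ Ω | O ⊆ {s : K × K | s.1 = 0 ∧ s.2 ≠ 0}} ∨
          (∃ b : K, b ≠ 0 ∧
            L = {O ∈ Ω | O ⊆ {s : K × K |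
              s ≠ (0, 0) ∧ s.1 ^ (q + 1) = b * s.2 ^ q + b ^ q * s.2}}) ∨
          (∃ c : K, c ≠ 0 ∧
            L = {O ∈ Ω | O ⊆ {s : K × K |
              s ≠ (0, 0) ∧ c ^ q * s.2 ^ q + c * s.2 = 0}})} →
      Ω.ncard = q ^ 2 + q + 1 ∧
      Lins.ncard = q ^ 2 + q + 1 ∧
      (∀ L ∈ Lins, L.ncard = q + 1) ∧
      (∀ L ∈ Lins, ∀ L' ∈ Lins, L ≠ L' → ∃! O : Set (K × K), O ∈ L ∧ O ∈ L') ∧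
      (∀ O ∈ Ω, ∀ O' ∈ Ω, O ≠ O' →
        ∃! L : Set (Set (K × K)), L ∈ Lins ∧ O ∈ L ∧ O' ∈ L) := by
  have hfa : ∀ x y : K, (x + y) ^ q = x ^ q + y ^ q := PPlane.frob_of_card q hq hK
  intro Ω Lins hΩ hL
  subst hΩ
  subst hL
  have e1 : {O : Set (K × K) | ∃ s : K × K, s ≠ (0, 0) ∧ O = MulAction.orbit (gGroup q u) s}
      = PPlane.OmegaSet K q u := rfl
  have e2 : {L : Set (Set (K × K)) |
      L = {O ∈ PPlane.OmegaSet K q u | O ⊆ {s : K × K | s.1 = 0 ∧ s.2 ≠ 0}} ∨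
      (∃ b : K, b ≠ 0 ∧
        L = {O ∈ PPlane.OmegaSet K q u | O ⊆ {s : K × K |
          s ≠ (0, 0) ∧ s.1 ^ (q + 1) = b * s.2 ^ q + b ^ q * s.2}}) ∨
      (∃ c : K, c ≠ 0 ∧
        L = {O ∈ PPlane.OmegaSet K q u | O ⊆ {s : K × K |
          s ≠ (0, 0) ∧ c ^ q * s.2 ^ q + c * s.2 = 0}})} = PPlane.LinsSet K q u := by
    ext L
    rw [PPlane.mem_LinsSet]
    exact Iff.rfl
  rw [e1, e2]
  refine ⟨PPlane.OmegaSet_ncard hu hK hq2, PPlane.LinsSet_ncard hu hK hq2 hfa, ?_, ?_, ?_⟩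
  · intro L hL
    rcases (PPlane.mem_LinsSet L).1 hL with rfl | ⟨b, hb, rfl⟩ | ⟨c, hc, rfl⟩
    · exact PPlane.lineInf_ncard hu hK hq2
    · exact PPlane.lineS_ncard hu hK hq2 hfa hb
    · exact PPlane.lineC_ncard hu hK hq2 hfa hc
  · intro L hL L' hL' hne
    rcases (PPlane.mem_LinsSet L).1 hL with rfl | ⟨b, hb, rfl⟩ | ⟨c, hc, rfl⟩ <;>
      rcases (PPlane.mem_LinsSet L').1 hL' with rfl | ⟨b', hb', rfl⟩ | ⟨c', hc', rfl⟩
    · exact absurd rfl hne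
    · exact PPlane.meet_Inf_S hu hK hq2 hfa hb'
    · exact PPlane.meet_Inf_C hu hK hq2 hfa hc'
    · exact PPlane.eu_and_swap (PPlane.meet_Inf_S hu hK hq2 hfa hb)
    · exact PPlane.meet_S_S hu hK hq2 hfa hb hb' hne
    · exact PPlane.meet_S_C hu hK hq2 hfa hb hc'
    · exact PPlane.eu_and_swap (PPlane.meet_Inf_C hu hK hq2 hfa hc)
    · exact PPlane.eu_and_swap (PPlane.meet_S_C hu hK hq2 hfa hb' hc)
    · exact PPlane.meet_C_C hu hK hq2 hfa hc hc' hne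
  · intro O hO O' hO' hne
    rcases (PPlane.mem_OmegaSet hu O).1 hO with ⟨z, rfl⟩ | ⟨y, hy, rfl⟩ <;>
      rcases (PPlane.mem_OmegaSet hu O').1 hO' with ⟨z', rfl⟩ | ⟨y', hy', rfl⟩
    · have hzz' : z ≠ z' := fun h => hne (by rw [h])
      exact PPlane.join_A_A hu hK hq2 hfa hzz'
    · exact PPlane.join_A_B hu hK hq2 hfa z hy'
    · exact PPlane.eu_and_swap23 (PPlane.join_A_B hu hK hq2 hfa z' hy)
    · exact PPlane.join_B_B hu hK hq2 hfa hy hy' hne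
end

section
/- Let Π be a finite projective plane of order n. If B is a set of exactly n + 1 points of Π such that every line of Π contains at least one point of B, then B is the set of points of some line of Π. -/
open Configuration

/-- In a finite projective plane of order `n`, a blocking set with exactly `n + 1` points is
a line. -/
theorem blocking_set_card_order_add_one_is_line
    (P L : Type*) [Membership P L] [ProjectivePlane P L] [Finite P] [Finite L]
    (B : Set P) (hB : B.ncard = ProjectivePlane.order P L + 1)
    (hblock : ∀ l : L, ∃ p ∈ B, p ∈ l) :
    ∃ l : L, B = {p : P | p ∈ l} := by
  classical
  have horder : 1 < ProjectivePlane.order P L := ProjectivePlane.one_lt_order P L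
  -- B has at least two points
  have h2 : 1 < B.ncard := by omega
  obtain ⟨b₁, b₂, hb₁, hb₂, hne⟩ := (Set.one_lt_ncard_iff B.toFinite).mp h2
  set l : L := HasLines.mkLine hne with hl
  have hb₁l : b₁ ∈ l := (HasLines.mkLine_ax hne).1
  have hb₂l : b₂ ∈ l := (HasLines.mkLine_ax hne).2
  -- key: every point on l is in B
  have hsub : {p : P | p ∈ l} ⊆ B := by
    intro q hq
    by_contra hqB
    have hq1 : b₁ ≠ q := fun h => hqB (h ▸ hb₁)
    have hq2 : b₂ ≠ q := fun h => hqB (h ▸ hb₂)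
    -- map from B to lines through q
    let f : B → {m : L // q ∈ m} := fun b =>
      ⟨HasLines.mkLine (show (b : P) ≠ q from fun h => hqB (h ▸ b.2)),
       (HasLines.mkLine_ax _).2⟩
    have hsurj : Function.Surjective f := by
      rintro ⟨m, hm⟩
      obtain ⟨b, hbB, hbm⟩ := hblock m
      have hbq : b ≠ q := fun h => hqB (h ▸ hbB)
      refine ⟨⟨b, hbB⟩, ?_⟩
      ext
      exact ((Nondegenerate.eq_or_eq (HasLines.mkLine_ax hbq).1
        (HasLines.mkLine_ax hbq).2 hbm hm).resolve_left hbq)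
    have hcard : Nat.card B = Nat.card {m : L // q ∈ m} := by
      rw [Nat.card_coe_set_eq, hB]
      have := ProjectivePlane.lineCount_eq L q
      unfold lineCount at this
      omega
    have hbij : Function.Bijective f :=
      (Nat.bijective_iff_surjective_and_card f).mpr ⟨hsurj, hcard⟩
    have : f ⟨b₁, hb₁⟩ = f ⟨b₂, hb₂⟩ := by
      apply Subtype.ext
      have e1 : HasLines.mkLine hq1 = l :=
        ((Nondegenerate.eq_or_eq (HasLines.mkLine_ax hq1).1
          (HasLines.mkLine_ax hq1).2 hb₁l hq).resolve_left hq1)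
      have e2 : HasLines.mkLine hq2 = l :=
        ((Nondegenerate.eq_or_eq (HasLines.mkLine_ax hq2).1
          (HasLines.mkLine_ax hq2).2 hb₂l hq).resolve_left hq2)
      simpa [f] using e1.trans e2.symm
    exact hne (Subtype.mk_eq_mk.mp (hbij.1 this))
  refine ⟨l, (Set.eq_of_subset_of_ncard_le hsub ?_ (Set.toFinite B)).symm⟩
  have : Set.ncard {p : P | p ∈ l} = ProjectivePlane.order P L + 1 := by
    have := ProjectivePlane.pointCount_eq P l
    unfold pointCount at this
    rw [← Nat.card_coe_set_eq]
    exact this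
  omega
end

section
/- Let Π be a finite projective plane of order n and let w be a function from the points of Π to the natural numbers such that: (i) the total weight Σ_P w(P) equals 2n + 2; (ii) the support {P : w(P) > 0} has at most n + 1 points; and (iii) for every line ℓ of Π, Σ_{P ∈ ℓ} w(P) ≥ 2 (w is a 2-fold blocking multiset). Then there is a line ℓ of Π such that w(P) = 2 for every point P on ℓ and w(P) = 0 for every point P not on ℓ. -/
open Configuration

/-- In a finite projective plane of order `n`, a 2-fold blocking multiset of total weight
`2n + 2` whose support has at most `n + 1` points is a line counted twice. -/
theorem two_fold_blocking_multiset_is_double_line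
    (P L : Type*) [Membership P L] [ProjectivePlane P L] [Fintype P] [Fintype L]
    [∀ l : L, DecidablePred (· ∈ l)]
    (w : P → ℕ)
    (htot : ∑ p : P, w p = 2 * ProjectivePlane.order P L + 2)
    (hsupp : {p : P | 0 < w p}.ncard ≤ ProjectivePlane.order P L + 1)
    (hblock : ∀ l : L, 2 ≤ ∑ p ∈ Finset.univ.filter (· ∈ l), w p) :
    ∃ l : L, (∀ p : P, p ∈ l → w p = 2) ∧ ∀ p : P, p ∉ l → w p = 0 := by
  classical
  set n := ProjectivePlane.order P L with hn
  have hn2 : 1 < n := ProjectivePlane.one_lt_order P L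
  set S : Finset P := Finset.univ.filter (fun p => 0 < w p) with hSdef
  have hScard : S.card ≤ n + 1 := by
    have hset : {p : P | 0 < w p} = ↑S := by ext p; simp [hSdef]
    rwa [hset, Set.ncard_coe_finset] at hsupp
  -- every line contains a point of positive weight
  have hA : ∀ l : L, ∃ q, q ∈ l ∧ 0 < w q := by
    intro l
    by_contra h
    push_neg at h
    have hz : ∑ p ∈ Finset.univ.filter (· ∈ l), w p = 0 := by
      apply Finset.sum_eq_zero
      intro p hp
      simp only [Finset.mem_filter] at hp
      have := h p hp.2
      omega
    have := hblock l
    omega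
  -- number of lines through a point
  have hTcard : ∀ p : P, (Finset.univ.filter (fun l : L => p ∈ l)).card = n + 1 := by
    intro p
    have h1 := ProjectivePlane.lineCount_eq L p
    rwa [lineCount, Nat.card_eq_fintype_card, Fintype.card_subtype] at h1
  -- number of points on a line
  have hPlcard : ∀ l : L, (Finset.univ.filter (· ∈ l)).card = n + 1 := by
    intro l
    have h1 := ProjectivePlane.pointCount_eq P l
    rwa [pointCount, Nat.card_eq_fintype_card, Fintype.card_subtype] at h1
  -- KEY: a line through a weight-zero point contains at most one support point
  have key : ∀ p : P, w p = 0 → ∀ l : L, p ∈ l → ∀ q₁ q₂ : P,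
      q₁ ∈ l → q₂ ∈ l → 0 < w q₁ → 0 < w q₂ → q₁ = q₂ := by
    intro p hp l hpl q₁ q₂ hq₁l hq₂l hq₁ hq₂
    by_contra hne
    set T : Finset L := Finset.univ.filter (fun m : L => p ∈ m) with hT
    have hq₂p : q₂ ≠ p := fun h => by rw [h, hp] at hq₂; omega
    let f : L → P := fun m => if m = l then q₁ else (hA m).choose
    have hfmem : ∀ m : L, f m ∈ m := by
      intro m
      by_cases h : m = l
      · subst h; simp only [f, if_pos rfl]; exact hq₁l
      · simp only [f, if_neg h]; exact (hA m).choose_spec.1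
    have hfS : ∀ m : L, f m ∈ S := by
      intro m
      by_cases h : m = l
      · simp [f, h, hSdef, hq₁]
      · simp only [f, if_neg h, hSdef, Finset.mem_filter, Finset.mem_univ, true_and]
        exact (hA m).choose_spec.2
    have hfp : ∀ m : L, f m ≠ p := by
      intro m he
      have := hfS m
      rw [he, hSdef] at this
      simp only [Finset.mem_filter, Finset.mem_univ, true_and, hp] at this
      omega
    have hinj : Set.InjOn f ↑T := by
      intro m₁ hm₁ m₂ hm₂ he
      by_contra hne'
      have hpm₁ : p ∈ m₁ := (Finset.mem_filter.mp (Finset.mem_coe.mp hm₁)).2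
      have hpm₂ : p ∈ m₂ := (Finset.mem_filter.mp (Finset.mem_coe.mp hm₂)).2
      have h2 : f m₁ ∈ m₂ := by rw [he]; exact hfmem m₂
      exact hne' ((Nondegenerate.eq_or_eq (hfmem m₁) hpm₁ h2 hpm₂).resolve_left (hfp m₁))
    have himg : Finset.image f T ⊆ S := by
      intro x hx
      obtain ⟨m, _, rfl⟩ := Finset.mem_image.mp hx
      exact hfS m
    have hq₂img : q₂ ∉ Finset.image f T := by
      intro hx
      obtain ⟨m, hm, hfm⟩ := Finset.mem_image.mp hx
      have hpm : p ∈ m := (Finset.mem_filter.mp hm).2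
      by_cases h : m = l
      · subst h
        simp only [f, if_pos rfl] at hfm
        exact hne (hfm.symm ▸ rfl)
      · have hq₂m : q₂ ∈ m := hfm ▸ hfmem m
        exact h ((Nondegenerate.eq_or_eq hq₂m hpm hq₂l hpl).resolve_left hq₂p)
    have hins : insert q₂ (Finset.image f T) ⊆ S := by
      intro x hx
      rcases Finset.mem_insert.mp hx with h | h
      · subst h; simp [hSdef, hq₂]
      · exact himg h
    have hc1 : (insert q₂ (Finset.image f T)).card = T.card + 1 := by
      rw [Finset.card_insert_of_notMem hq₂img, Finset.card_image_of_injOn hinj]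
    have hc2 := Finset.card_le_card hins
    rw [hc1, hTcard p] at hc2
    omega
  -- pick two distinct support points
  obtain ⟨p₁, p₂, p₃, l₁, -, -, -, -, -, -, -, -⟩ :=
    ProjectivePlane.exists_config (P := P) (L := L)
  obtain ⟨a, hal, ha⟩ := hA l₁
  obtain ⟨l₂', hal₂⟩ := Nondegenerate.exists_line (P := P) (L := L) a
  obtain ⟨b, hbl, hb⟩ := hA l₂'
  have hab : a ≠ b := fun h => hal₂ (h ▸ hbl)
  set ℓ : L := HasLines.mkLine hab with hℓ
  have haℓ : a ∈ ℓ := (HasLines.mkLine_ax hab).1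
  have hbℓ : b ∈ ℓ := (HasLines.mkLine_ax hab).2
  -- every point of ℓ has positive weight
  have hpos : ∀ p : P, p ∈ ℓ → 0 < w p := by
    intro p hpℓ
    by_contra h
    push_neg at h
    have hp0 : w p = 0 := Nat.le_zero.mp h
    exact hab (key p hp0 ℓ hpℓ a b haℓ hbℓ ha hb)
  set Pl : Finset P := Finset.univ.filter (· ∈ ℓ) with hPl
  have hPlS : Pl ⊆ S := by
    intro p hp
    simp only [hPl, hSdef, Finset.mem_filter, Finset.mem_univ, true_and] at hp ⊢
    exact hpos p hp
  have hSeq : Pl = S :=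
    Finset.eq_of_subset_of_card_le hPlS (by rw [hPlcard ℓ]; exact hScard)
  -- points off ℓ have weight zero
  have hw0 : ∀ p : P, p ∉ ℓ → w p = 0 := by
    intro p hpℓ
    by_contra h
    have hpS : p ∈ S := by
      simp only [hSdef, Finset.mem_filter, Finset.mem_univ, true_and]
      omega
    rw [← hSeq] at hpS
    exact hpℓ (Finset.mem_filter.mp hpS).2
  -- each point of ℓ has weight at least 2
  have hge2 : ∀ p : P, p ∈ ℓ → 2 ≤ w p := by
    intro p hpℓ
    have h1 : 1 < (Finset.univ.filter (fun m : L => p ∈ m)).card := by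
      rw [hTcard p]; omega
    obtain ⟨m, hm, hmℓ⟩ := Finset.exists_mem_ne h1 ℓ
    have hpm : p ∈ m := (Finset.mem_filter.mp hm).2
    have hsum : ∑ q ∈ Finset.univ.filter (· ∈ m), w q = w p := by
      rw [Finset.sum_eq_single p]
      · intro q hq hqp
        have hqm : q ∈ m := (Finset.mem_filter.mp hq).2
        apply hw0
        intro hqℓ
        exact hmℓ ((Nondegenerate.eq_or_eq hqℓ hpℓ hqm hpm).resolve_left hqp).symm
      · intro hp
        exact absurd (Finset.mem_filter.mpr ⟨Finset.mem_univ p, hpm⟩) hp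
    have := hblock m
    omega
  -- total weight on ℓ
  have hsumℓ : ∑ p ∈ Pl, w p = 2 * n + 2 := by
    rw [Finset.sum_subset (Finset.subset_univ Pl)
      (fun x _ hx => hw0 x (fun hxl => hx (Finset.mem_filter.mpr ⟨Finset.mem_univ x, hxl⟩)))]
    exact htot
  -- each weight on ℓ is at most 2
  have hle2 : ∀ p ∈ Pl, w p ≤ 2 := by
    by_contra h
    push_neg at h
    obtain ⟨p, hp, hp2⟩ := h
    have hlt : ∑ _q ∈ Pl, (2 : ℕ) < ∑ q ∈ Pl, w q := by
      apply Finset.sum_lt_sum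
      · intro i hi; exact hge2 i (Finset.mem_filter.mp hi).2
      · exact ⟨p, hp, hp2⟩
    rw [Finset.sum_const, smul_eq_mul, hsumℓ] at hlt
    have hc : Pl.card = n + 1 := hPlcard ℓ
    omega
  refine ⟨ℓ, fun p hp => ?_, hw0⟩
  have h1 := hge2 p hp
  have h2 := hle2 p (Finset.mem_filter.mpr ⟨Finset.mem_univ p, hp⟩)
  omega
end
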